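/- arXiv:gr-qc/0504081 — 3 statements merged into one kernel-verified Lean document; each statement's English description precedes it below -/
import Mathlib

section
/- Let K ⊆ ℝ³ be compact with nonempty frontier, let Ω = ℝ³ ∖ K, and assume Ω is connected. Suppose G is continuous on the closure of Ω, harmonic on Ω, equal to 0 at every point of the frontier of Ω, and G(x) → 1 as ‖x‖ → ∞. Then 0 < G(x) < 1 for every x ∈ Ω. -/
open Filter

/-- Euclidean 3-space. -/
noncomputable abbrev E3 := EuclideanSpace ℝ (Fin 3)

/-- The Laplacian of `u : E3 → ℝ` at `x`: the trace of the Hessian, computed as the sum of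
the pure second derivatives in the standard coordinate directions. -/
noncomputable def laplacian (u : E3 → ℝ) (x : E3) : ℝ :=
  ∑ i : Fin 3, iteratedFDeriv ℝ 2 u x ![EuclideanSpace.single i 1, EuclideanSpace.single i 1]

/-- `u` is harmonic on `Ω`: it is `C²` on `Ω` and its Laplacian vanishes on `Ω`. -/
def HarmonicOn (u : E3 → ℝ) (Ω : Set E3) : Prop :=
  ContDiffOn ℝ 2 u Ω ∧ ∀ x ∈ Ω, laplacian u x = 0

section Auxiliary

open Set

/-! ### Line derivatives -/

lemma line_deriv1 {v : E3 → ℝ} {y : E3} (hv : DifferentiableAt ℝ v y) (x e : E3) (t : ℝ)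
    (hy : y = x + t • e) :
    HasDerivAt (fun s => v (x + s • e)) (fderiv ℝ v y e) t := by
  subst hy
  have hL : HasDerivAt (fun s : ℝ => x + s • e) e t := by
    simpa using ((hasDerivAt_id t).smul_const e).const_add x
  exact (hv.hasFDerivAt.comp_hasDerivAt t hL)

lemma line_deriv2 {v : E3 → ℝ} {x : E3} (hv : ContDiffAt ℝ 2 v x) (e : E3) :
    HasDerivAt (fun t : ℝ => fderiv ℝ v (x + t • e) e)
      (iteratedFDeriv ℝ 2 v x ![e, e]) 0 := by
  have hd : DifferentiableAt ℝ (fderiv ℝ v) x := by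
    have := hv.fderiv_right (m := 1) (by norm_num)
    exact this.differentiableAt one_ne_zero
  have hA : HasFDerivAt (fun y => fderiv ℝ v y e)
      ((ContinuousLinearMap.apply ℝ ℝ e).comp (fderiv ℝ (fderiv ℝ v) x)) x :=
    (ContinuousLinearMap.apply ℝ ℝ e).hasFDerivAt.comp x hd.hasFDerivAt
  have hL : HasDerivAt (fun s : ℝ => x + s • e) e 0 := by
    simpa using ((hasDerivAt_id (0:ℝ)).smul_const e).const_add x
  have hA' : HasFDerivAt (fun y => fderiv ℝ v y e)
      ((ContinuousLinearMap.apply ℝ ℝ e).comp (fderiv ℝ (fderiv ℝ v) x)) (x + (0:ℝ) • e) := by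
    simpa using hA
  have := hA'.comp_hasDerivAt (0:ℝ) hL
  rw [iteratedFDeriv_two_apply]
  simpa [Function.comp_def] using this

/-! ### Second derivative test -/

lemma second_deriv_test {f f' : ℝ → ℝ} {c : ℝ}
    (hf : ∀ᶠ t in nhds (0:ℝ), HasDerivAt f (f' t) t)
    (hf' : HasDerivAt f' c 0) (hmax : IsLocalMax f 0) : c ≤ 0 := by
  by_contra hc
  push_neg at hc
  have h0 : f' 0 = 0 := by
    have := hmax.hasDerivAt_eq_zero hf.self_of_nhds
    simpa using this
  have hslope : Tendsto (slope f' 0) (nhdsWithin 0 {(0:ℝ)}ᶜ) (nhds c) :=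
    hasDerivAt_iff_tendsto_slope.1 hf'
  have hpos : ∀ᶠ t in nhdsWithin (0:ℝ) (Ioi 0), 0 < f' t := by
    have h1 : ∀ᶠ t in nhdsWithin (0:ℝ) (Ioi 0), c/2 < slope f' 0 t := by
      have : ∀ᶠ t in nhdsWithin (0:ℝ) {(0:ℝ)}ᶜ, c/2 < slope f' 0 t :=
        hslope.eventually (eventually_gt_nhds (by linarith))
      exact this.filter_mono (nhdsWithin_mono _ (fun t ht => ne_of_gt ht))
    have h2 : ∀ᶠ t in nhdsWithin (0:ℝ) (Ioi 0), 0 < t := self_mem_nhdsWithin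
    filter_upwards [h1, h2] with t h1 h2
    have hs : slope f' 0 t = t⁻¹ * f' t := by simp [slope, h0]
    rw [hs] at h1
    by_contra hle
    push_neg at hle
    have : t⁻¹ * f' t ≤ 0 := mul_nonpos_of_nonneg_of_nonpos (inv_nonneg.2 h2.le) hle
    linarith
  have hmem : ∀ᶠ t in nhdsWithin (0:ℝ) (Ioi 0),
      HasDerivAt f (f' t) t ∧ f t ≤ f 0 :=
    ((hf.and hmax).filter_mono nhdsWithin_le_nhds)
  obtain ⟨u, hu, hsub⟩ := mem_nhdsGT_iff_exists_Ioo_subset.1 (hpos.and hmem)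
  set t₀ := u/2 with ht₀
  have hu0 : 0 < u := hu
  have ht₀u : t₀ ∈ Ioo (0:ℝ) u := ⟨by positivity, by linarith⟩
  have hmono : StrictMonoOn f (Icc 0 t₀) := by
    apply strictMonoOn_of_deriv_pos (convex_Icc _ _)
    · intro t ht
      rcases eq_or_lt_of_le ht.1 with h | h
      · rw [← h]
        exact hf.self_of_nhds.continuousAt.continuousWithinAt
      · exact ((hsub ⟨h, lt_of_le_of_lt ht.2 ht₀u.2⟩).2.1.continuousAt).continuousWithinAt
    · intro t ht
      rw [interior_Icc] at ht
      have hm := hsub ⟨ht.1, lt_trans ht.2 ht₀u.2⟩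
      rw [hm.2.1.deriv]
      exact hm.1
  have := hmono (left_mem_Icc.2 ht₀u.1.le) (right_mem_Icc.2 ht₀u.1.le) ht₀u.1
  have hle := (hsub ht₀u).2.2
  linarith

/-! ### The maximum principle for strictly subharmonic functions -/

lemma maxPrinciple (D : Set E3) (hD : IsOpen D) (hb : Bornology.IsBounded D)
    (hne : D.Nonempty) {v : E3 → ℝ} (hvc : ContinuousOn v (closure D))
    (hv2 : ContDiffOn ℝ 2 v D) (hlap : ∀ x ∈ D, 0 < laplacian v x) :
    ∃ z ∈ frontier D, ∀ x ∈ closure D, v x ≤ v z := by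
  have hcpt : IsCompact (closure D) :=
    Metric.isCompact_of_isClosed_isBounded isClosed_closure hb.closure
  obtain ⟨z, hz, hmax⟩ := hcpt.exists_isMaxOn (hne.mono subset_closure) hvc
  by_cases h : z ∈ D
  · exfalso
    have hvz : ContDiffAt ℝ 2 v z := hv2.contDiffAt (hD.mem_nhds h)
    have key : ∀ i : Fin 3,
        iteratedFDeriv ℝ 2 v z ![EuclideanSpace.single i 1, EuclideanSpace.single i 1] ≤ 0 := by
      intro i
      set e : E3 := EuclideanSpace.single i 1 with he
      have hline : Continuous (fun t : ℝ => z + t • e) := by continuity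
      have hmem : ∀ᶠ t in nhds (0:ℝ), z + t • e ∈ D := by
        have : (fun t : ℝ => z + t • e) 0 ∈ D := by simpa using h
        exact hline.continuousAt.preimage_mem_nhds (hD.mem_nhds this)
      apply second_deriv_test (f := fun t => v (z + t • e))
          (f' := fun t => fderiv ℝ v (z + t • e) e)
      · filter_upwards [hmem] with t ht
        exact line_deriv1 ((hv2.differentiableOn (by norm_num)).differentiableAt
          (hD.mem_nhds ht)) z e t rfl
      · exact line_deriv2 hvz e
      · have h0 : v (z + (0:ℝ) • e) = v z := by simp
        unfold IsLocalMax IsMaxFilter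
        rw [show (fun t : ℝ => v (z + t • e)) 0 = v z by simp]
        filter_upwards [hmem] with t ht
        exact hmax (subset_closure ht)
    have : laplacian v z ≤ 0 := by
      unfold laplacian
      exact Finset.sum_nonpos fun i _ => key i
    exact absurd (hlap z h) (not_lt.2 this)
  · refine ⟨z, ?_, fun x hx => hmax hx⟩
    rw [frontier, hD.interior_eq]
    exact ⟨hz, h⟩

/-! ### Laplacians of explicit functions -/

lemma norm_sq_contDiff (c : E3) : ContDiff ℝ 2 (fun y : E3 => ‖y - c‖^2) :=
  (contDiff_id.sub contDiff_const).norm_sq ℝ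

lemma radial_contDiffAt {φ : ℝ → ℝ} {c x : E3} (hφ : ContDiffAt ℝ 2 φ (‖x - c‖^2)) :
    ContDiffAt ℝ 2 (fun y => φ (‖y - c‖^2)) x :=
  hφ.comp x (norm_sq_contDiff c).contDiffAt

lemma norm_sq_line (x c e : E3) (he : ‖e‖ = 1) (t : ℝ) :
    ‖x + t • e - c‖^2 = ‖x - c‖^2 + 2 * (inner ℝ (x - c) e : ℝ) * t + t^2 := by
  have : x + t • e - c = (x - c) + t • e := by abel
  rw [this, norm_add_sq_real, real_inner_smul_right, norm_smul]
  simp [he, Real.norm_eq_abs, sq_abs, abs_mul]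
  ring

lemma iteratedFDeriv_radial {φ φd : ℝ → ℝ} {c x : E3} {A : ℝ}
    (hφ : ContDiffAt ℝ 2 φ (‖x - c‖^2))
    (hd : ∀ᶠ s in nhds (‖x - c‖^2), HasDerivAt φ (φd s) s)
    (hdd : HasDerivAt φd A (‖x - c‖^2)) (e : E3) (he : ‖e‖ = 1) :
    iteratedFDeriv ℝ 2 (fun y => φ (‖y - c‖^2)) x ![e, e]
      = 4 * (inner ℝ (x - c) e : ℝ)^2 * A + 2 * φd (‖x - c‖^2) := by
  set q : ℝ := ‖x - c‖^2 with hqdef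
  set B : ℝ := (inner ℝ (x - c) e : ℝ) with hB
  set v : E3 → ℝ := fun y => φ (‖y - c‖^2) with hv
  set p : ℝ → ℝ := fun t => q + 2 * B * t + t^2 with hp
  have hvCA : ContDiffAt ℝ 2 v x := radial_contDiffAt hφ
  have hpder : ∀ t : ℝ, HasDerivAt p (2 * B + 2 * t) t := by
    intro t
    have h1 : HasDerivAt (fun t : ℝ => q + 2 * B * t) (2 * B) t := by
      simpa using (((hasDerivAt_id t).const_mul (2 * B)).const_add q)
    have h2 : HasDerivAt (fun t : ℝ => t^2) (2 * t) t := by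
      simpa using hasDerivAt_pow 2 t
    exact h1.add h2
  have hp0 : p 0 = q := by simp [hp]
  have hptend : Tendsto p (nhds 0) (nhds q) := by
    have := (hpder 0).continuousAt.tendsto
    rwa [hp0] at this
  have hfline : (fun s : ℝ => v (x + s • e)) = fun s => φ (p s) := by
    funext s
    simp only [hv, hp, hqdef, hB]
    rw [norm_sq_line x c e he s]
  have heventd : ∀ᶠ t in nhds (0:ℝ), HasDerivAt (fun s : ℝ => v (x + s • e))
      (φd (p t) * (2 * B + 2 * t)) t := by
    filter_upwards [hptend.eventually hd] with t ht
    rw [hfline]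
    exact HasDerivAt.comp t ht (hpder t)
  have heventfd : ∀ᶠ t in nhds (0:ℝ), HasDerivAt (fun s : ℝ => v (x + s • e))
      (fderiv ℝ v (x + t • e) e) t := by
    have hev : ∀ᶠ y in nhds x, DifferentiableAt ℝ v y := by
      filter_upwards [hvCA.eventually (by norm_num)] with y hy
      exact hy.differentiableAt (by norm_num)
    have hline : Continuous (fun t : ℝ => x + t • e) := by continuity
    have h0 : (fun t : ℝ => x + t • e) 0 = x := by simp
    have hmem : (fun t : ℝ => x + t • e) ⁻¹' {y | DifferentiableAt ℝ v y} ∈ nhds (0:ℝ) :=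
      hline.continuousAt.preimage_mem_nhds
        (show _ ∈ nhds ((fun t : ℝ => x + t • e) 0) by rw [h0]; exact hev)
    filter_upwards [hmem] with t ht
    exact line_deriv1 ht x e t rfl
  have hEq : (fun t : ℝ => fderiv ℝ v (x + t • e) e)
      =ᶠ[nhds (0:ℝ)] (fun t => φd (p t) * (2 * B + 2 * t)) := by
    filter_upwards [heventd, heventfd] with t h1 h2
    exact h2.unique h1
  have hsecond : HasDerivAt (fun t => φd (p t) * (2 * B + 2 * t))
      (iteratedFDeriv ℝ 2 v x ![e, e]) 0 :=
    (line_deriv2 hvCA e).congr_of_eventuallyEq hEq.symm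
  have hdd0 : HasDerivAt φd A (p 0) := by rwa [hp0]
  have h1 : HasDerivAt (fun t => φd (p t)) (A * (2 * B + 2 * 0)) 0 :=
    HasDerivAt.comp 0 hdd0 (hpder 0)
  have h2 : HasDerivAt (fun t : ℝ => 2 * B + 2 * t) 2 0 := by
    simpa using ((hasDerivAt_id (0:ℝ)).const_mul 2).const_add (2 * B)
  have hg : HasDerivAt (fun t => φd (p t) * (2 * B + 2 * t))
      ((A * (2 * B + 2 * 0)) * (2 * B + 2 * 0) + φd (p 0) * 2) 0 := h1.mul h2
  have := hsecond.unique hg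
  rw [this, hp0]
  ring

lemma laplacian_radial {φ φd : ℝ → ℝ} {c x : E3} {A : ℝ}
    (hφ : ContDiffAt ℝ 2 φ (‖x - c‖^2))
    (hd : ∀ᶠ s in nhds (‖x - c‖^2), HasDerivAt φ (φd s) s)
    (hdd : HasDerivAt φd A (‖x - c‖^2)) :
    laplacian (fun y => φ (‖y - c‖^2)) x = 4 * ‖x - c‖^2 * A + 6 * φd (‖x - c‖^2) := by
  unfold laplacian
  have key : ∀ i : Fin 3, iteratedFDeriv ℝ 2 (fun y => φ (‖y - c‖^2)) x
      ![EuclideanSpace.single i 1, EuclideanSpace.single i 1]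
      = ((x - c) i)^2 * (4 * A) + 2 * φd (‖x - c‖^2) := by
    intro i
    have he : ‖(EuclideanSpace.single i (1:ℝ) : E3)‖ = 1 := by
      simp [EuclideanSpace.norm_single]
    rw [iteratedFDeriv_radial hφ hd hdd _ he, EuclideanSpace.inner_single_right]
    simp only [RCLike.conj_to_real, starRingEnd_apply, star_trivial, one_mul]
    ring
  rw [Finset.sum_congr rfl (fun i _ => key i)]
  have hsum : ∑ i : Fin 3, ((x - c) i)^2 = ‖x - c‖^2 := by
    rw [EuclideanSpace.norm_eq]
    rw [Real.sq_sqrt (Finset.sum_nonneg fun i _ => sq_nonneg _)]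
    simp [Real.norm_eq_abs, sq_abs]
  rw [Finset.sum_add_distrib, ← Finset.sum_mul, hsum, Finset.sum_const]
  simp only [Finset.card_univ, Fintype.card_fin, nsmul_eq_mul]
  push_cast
  ring

lemma laplacian_sub {s : Set E3} (hs : IsOpen s) {x : E3} (hx : x ∈ s) {f g : E3 → ℝ}
    (hf : ContDiffOn ℝ 2 f s) (hg : ContDiffOn ℝ 2 g s) :
    laplacian (fun y => f y - g y) x = laplacian f x - laplacian g x := by
  unfold laplacian
  rw [← Finset.sum_sub_distrib]
  apply Finset.sum_congr rfl
  intro i _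
  have key : iteratedFDeriv ℝ 2 (fun y => f y - g y) x
      = iteratedFDeriv ℝ 2 f x - iteratedFDeriv ℝ 2 g x := by
    rw [← iteratedFDerivWithin_of_isOpen 2 hs hx,
        ← iteratedFDerivWithin_of_isOpen 2 hs hx (f := f),
        ← iteratedFDerivWithin_of_isOpen 2 hs hx (f := g)]
    have h1 : (fun y => f y - g y) = f + (fun y => - g y) := by
      funext y; simp [sub_eq_add_neg]
    rw [h1, iteratedFDerivWithin_add_apply (hf.contDiffWithinAt hx) (hg.neg.contDiffWithinAt hx) hs.uniqueDiffOn hx]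
    have h2 : iteratedFDerivWithin ℝ 2 (fun x => -g x) s x
        = -(iteratedFDerivWithin ℝ 2 g s x) :=
      iteratedFDerivWithin_neg_apply hs.uniqueDiffOn hx
    rw [h2, sub_eq_add_neg]
  rw [key]
  rfl

lemma laplacian_neg (f : E3 → ℝ) (x : E3) :
    laplacian (fun y => -f y) x = - laplacian f x := by
  unfold laplacian
  rw [← Finset.sum_neg_distrib]
  apply Finset.sum_congr rfl
  intro i _
  have key : iteratedFDeriv ℝ 2 (fun y => -f y) x = -iteratedFDeriv ℝ 2 f x :=
    iteratedFDeriv_neg_apply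
  rw [key]
  rfl

lemma laplacian_const (a : ℝ) (x : E3) : laplacian (fun _ => a) x = 0 := by
  unfold laplacian
  apply Finset.sum_eq_zero
  intro i _
  rw [iteratedFDeriv_const_of_ne (by norm_num)]
  rfl

/-! ### Barrier functions -/

lemma rpow_negHalf_sq {a : ℝ} (ha : 0 < a) : (a^2 : ℝ) ^ (-(1:ℝ)/2) = a⁻¹ := by
  rw [← Real.rpow_natCast a 2, ← Real.rpow_mul ha.le]
  norm_num
  rw [Real.rpow_neg_one]

noncomputable def bar (ε β ρi : ℝ) (s : ℝ) : ℝ := ε * (s ^ (-(1:ℝ)/2) - ρi) + β * s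

noncomputable def bard (ε β : ℝ) (s : ℝ) : ℝ := ε * (-(1:ℝ)/2 * s ^ (-(1:ℝ)/2 - 1)) + β

lemma bar_contDiffAt {ε β ρi : ℝ} {s : ℝ} (hs : 0 < s) : ContDiffAt ℝ 2 (bar ε β ρi) s := by
  unfold bar
  exact (contDiffAt_const.mul ((Real.contDiffAt_rpow_const_of_ne hs.ne').sub
    contDiffAt_const)).add (contDiffAt_const.mul contDiffAt_id)

lemma bar_hasDerivAt {ε β ρi : ℝ} {s : ℝ} (hs : 0 < s) :
    HasDerivAt (bar ε β ρi) (bard ε β s) s := by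
  have h1 : HasDerivAt (fun s : ℝ => s ^ (-(1:ℝ)/2)) (-(1:ℝ)/2 * s ^ (-(1:ℝ)/2 - 1)) s :=
    Real.hasDerivAt_rpow_const (Or.inl hs.ne')
  have := ((h1.sub_const ρi).const_mul ε).add ((hasDerivAt_id s).const_mul β)
  exact this.congr_deriv (by simp [bard])

lemma bard_hasDerivAt {ε β : ℝ} {s : ℝ} (hs : 0 < s) :
    HasDerivAt (bard ε β) (ε * (-(1:ℝ)/2 * ((-(1:ℝ)/2 - 1) * s ^ (-(1:ℝ)/2 - 1 - 1)))) s := by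
  have h1 : HasDerivAt (fun s : ℝ => s ^ (-(1:ℝ)/2 - 1))
      ((-(1:ℝ)/2 - 1) * s ^ (-(1:ℝ)/2 - 1 - 1)) s :=
    Real.hasDerivAt_rpow_const (Or.inl hs.ne')
  have := ((h1.const_mul (-(1:ℝ)/2)).const_mul ε).add_const β
  exact this

lemma laplacian_barrier {c x : E3} (hx : x ≠ c) (ε β ρi : ℝ) :
    laplacian (fun y => bar ε β ρi (‖y - c‖^2)) x = 6 * β := by
  have hq : (0:ℝ) < ‖x - c‖^2 := by
    have : x - c ≠ 0 := sub_ne_zero.2 hx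
    exact pow_pos (norm_pos_iff.2 this) 2
  set q : ℝ := ‖x - c‖^2 with hqdef
  rw [laplacian_radial (bar_contDiffAt hq)
      ((eventually_gt_nhds hq).mono fun s hs => bar_hasDerivAt hs)
      (bard_hasDerivAt hq)]
  unfold bard
  have h1 : q * q ^ (-(1:ℝ)/2 - 1 - 1) = q ^ (-(1:ℝ)/2 - 1) := by
    nth_rewrite 1 [← Real.rpow_one q]
    rw [← Real.rpow_add hq]
    norm_num
  have expand : 4 * q * (ε * (-(1:ℝ)/2 * ((-(1:ℝ)/2 - 1) * q ^ (-(1:ℝ)/2 - 1 - 1))))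
      = 3 * ε * (q * q ^ (-(1:ℝ)/2 - 1 - 1)) := by ring
  rw [expand, h1]
  ring

lemma laplacian_sq (β : ℝ) (c x : E3) : laplacian (fun y => β * ‖y - c‖^2) x = 6 * β := by
  have := laplacian_radial (φ := fun s => β * s) (φd := fun _ => β) (A := 0) (c := c) (x := x)
    (contDiffAt_const.mul contDiffAt_id)
    (Eventually.of_forall fun s => by simpa using (hasDerivAt_id s).const_mul β)
    (hasDerivAt_const _ β)
  simpa using this

lemma aux_le {a C : ℝ} (hC : 0 ≤ C) (h : ∀ β : ℝ, 0 < β → a ≤ β * C) : a ≤ 0 := by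
  rcases eq_or_lt_of_le hC with hC0 | hC0
  · have := h 1 one_pos
    rw [← hC0] at this
    linarith
  · by_contra h'
    push_neg at h'
    have h2 := h (a / (2 * C)) (by positivity)
    have h3 : a / (2 * C) * C = a / 2 := by field_simp
    rw [h3] at h2
    linarith

end Auxiliary
section Weak
open Set Metric Bornology

lemma weak_bound_above (K : Set E3) (hK : IsCompact K) (f : E3 → ℝ)
    (hcont : ContinuousOn f (closure Kᶜ))
    (hf2 : ContDiffOn ℝ 2 f Kᶜ) (hflap : ∀ x ∈ Kᶜ, laplacian f x = 0)
    (hbdry : ∀ p ∈ frontier Kᶜ, f p = 0) {L M : ℝ}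
    (hlim : Tendsto f (Filter.cocompact E3) (nhds L))
    (hM : 0 ≤ M) (hLM : L ≤ M) : ∀ x ∈ Kᶜ, f x ≤ M := by
  intro x hx
  have hΩ : IsOpen (Kᶜ : Set E3) := hK.isClosed.isOpen_compl
  have key : ∀ ε : ℝ, 0 < ε → f x ≤ M + ε := by
    intro ε hε
    have hev : ∀ᶠ y in Filter.cocompact E3, f y < L + ε :=
      hlim.eventually_lt_const (by linarith)
    obtain ⟨C, hCcpt, hCsub⟩ := Filter.mem_cocompact.1 hev
    obtain ⟨R₀, hR₀⟩ := (isBounded_iff_subset_closedBall 0).1 (hK.union hCcpt).isBounded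
    set R : ℝ := max R₀ ‖x‖ + 1 with hR
    have hR₀R : R₀ < R := by
      have := le_max_left R₀ ‖x‖; linarith
    have hxR : ‖x‖ < R := by
      have := le_max_right R₀ ‖x‖; linarith
    have hRpos : 0 < R := lt_of_le_of_lt (norm_nonneg x) hxR
    set D : Set E3 := Kᶜ ∩ ball 0 R with hD
    have hDopen : IsOpen D := hΩ.inter isOpen_ball
    have hDb : IsBounded D := isBounded_ball.subset inter_subset_right
    have hxD : x ∈ D := ⟨hx, by simpa [mem_ball, dist_eq_norm] using hxR⟩
    have hclos : closure D ⊆ closure Kᶜ ∩ closedBall 0 R := by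
      refine subset_trans (closure_inter_subset_inter_closure _ _) ?_
      exact inter_subset_inter le_rfl (by rw [closure_ball 0 hRpos.ne'])
    -- the quantitative bound for each β > 0
    have main : ∀ β : ℝ, 0 < β → f x ≤ M + ε + β * R^2 := by
      intro β hβ
      set v : E3 → ℝ := fun y => (fun y => β * ‖y - 0‖^2) y - (fun y => - f y) y with hv
      have hsqC : ContDiffOn ℝ 2 (fun y : E3 => β * ‖y - 0‖^2) D :=
        (contDiff_const.mul (norm_sq_contDiff 0)).contDiffOn
      have hvc : ContinuousOn v (closure D) := by
        apply ContinuousOn.sub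
        · exact (contDiff_const.mul (norm_sq_contDiff 0)).continuous.continuousOn
        · exact (hcont.mono (fun y hy => (hclos hy).1)).neg
      have hv2 : ContDiffOn ℝ 2 v D :=
        hsqC.sub ((hf2.mono inter_subset_left).neg)
      have hlapv : ∀ y ∈ D, 0 < laplacian v y := by
        intro y hy
        rw [laplacian_sub hDopen hy hsqC ((hf2.mono inter_subset_left).neg),
            laplacian_sq, laplacian_neg, hflap y hy.1]
        simpa using hβ
      obtain ⟨z, hzfr, hzmax⟩ := maxPrinciple D hDopen hDb ⟨x, hxD⟩ hvc hv2 hlapv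
      have hzcl : z ∈ closure D := frontier_subset_closure hzfr
      have hznD : z ∉ D := by
        rw [frontier, hDopen.interior_eq] at hzfr
        exact hzfr.2
      have hzKcl : z ∈ closure Kᶜ := (hclos hzcl).1
      have hzB : ‖z‖ ≤ R := by
        have := (hclos hzcl).2
        simpa [mem_closedBall, dist_eq_norm] using this
      -- bound v z
      have hvz : v z ≤ β * R^2 + (M + ε) := by
        by_cases hzK : z ∈ K
        · have hzfrK : z ∈ frontier Kᶜ := by
            rw [frontier_compl, frontier_eq_closure_inter_closure]
            exact ⟨subset_closure hzK, hzKcl⟩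
          have hfz : f z = 0 := hbdry z hzfrK
          have : v z = β * ‖z‖^2 := by simp [hv, hfz]
          rw [this]
          have hsq : ‖z‖^2 ≤ R^2 := by nlinarith [norm_nonneg z]
          have : β * ‖z‖^2 ≤ β * R^2 := mul_le_mul_of_nonneg_left hsq hβ.le
          linarith
        · have hzKc : z ∈ (Kᶜ : Set E3) := hzK
          have hzout : ¬ (‖z‖ < R) := fun hlt => hznD ⟨hzKc, by
            simpa [mem_ball, dist_eq_norm] using hlt⟩
          have hzR : ‖z‖ = R := le_antisymm hzB (not_lt.1 hzout)
          have hzC : z ∉ C := by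
            intro hzC
            have := hR₀ (Or.inr hzC)
            rw [mem_closedBall, dist_eq_norm, sub_zero] at this
            rw [hzR] at this
            linarith
          have hfz : f z < L + ε := hCsub hzC
          have : v z ≤ β * ‖z‖^2 + (L + ε) := by
            simp only [hv, sub_zero, sub_neg_eq_add]
            nlinarith
          rw [hzR] at this
          linarith
      have hvx := hzmax x (subset_closure hxD)
      have : v x = β * ‖x‖^2 + f x := by simp [hv]
      rw [this] at hvx
      nlinarith [mul_nonneg hβ.le (sq_nonneg ‖x‖)]
    -- let β → 0
    have := aux_le (a := f x - (M + ε)) (C := R^2) (sq_nonneg R)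
      (fun β hβ => by have := main β hβ; linarith)
    linarith
  by_contra hcon
  push_neg at hcon
  have := key ((f x - M)/2) (by linarith)
  linarith

end Weak
section Strong
open Set Metric Bornology

set_option maxHeartbeats 1000000 in
lemma strongMin (Ω : Set E3) (hΩ : IsOpen Ω) (u : E3 → ℝ) (hC : ContDiffOn ℝ 2 u Ω)
    (hlapu : ∀ x ∈ Ω, laplacian u x = 0) (hnn : ∀ x ∈ Ω, 0 ≤ u x) :
    IsOpen {x | x ∈ Ω ∧ u x = 0} := by
  rw [Metric.isOpen_iff]
  rintro x₀ ⟨hx₀Ω, hux₀⟩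
  obtain ⟨δ, hδ, hball⟩ := Metric.isOpen_iff.1 hΩ x₀ hx₀Ω
  set R : ℝ := δ/4 with hRdef
  have hR : 0 < R := by positivity
  have hsub3 : closedBall x₀ (3*R) ⊆ Ω := fun p hp => hball (by
    rw [mem_closedBall] at hp
    rw [mem_ball]
    linarith [hp])
  refine ⟨R, hR, ?_⟩
  intro y hy
  have hyx₀ : dist y x₀ < R := hy
  have hyΩ : y ∈ Ω := hsub3 (by rw [mem_closedBall]; linarith)
  constructor
  · exact hyΩ
  by_contra huy
  have huy' : 0 < u y := lt_of_le_of_ne (hnn y hyΩ) (Ne.symm huy)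
  -- the zero set inside the ball of radius 2R
  set Z : Set E3 := closedBall x₀ (2*R) ∩ u ⁻¹' {0} with hZdef
  have hZsubΩ : Z ⊆ Ω := fun p hp => hsub3 (closedBall_subset_closedBall (by linarith) hp.1)
  have hZclosed : IsClosed Z :=
    ContinuousOn.preimage_isClosed_of_isClosed
      (hC.continuousOn.mono (fun p hp => hsub3 (closedBall_subset_closedBall (by linarith) hp)))
      Metric.isClosed_closedBall isClosed_singleton
  have hZne : x₀ ∈ Z := ⟨by simp [mem_closedBall]; positivity, by simp [hux₀]⟩
  have hZcpt : IsCompact Z :=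
    isCompact_of_isClosed_isBounded hZclosed (isBounded_closedBall.subset inter_subset_left)
  set r : ℝ := infDist y Z with hrdef
  have hrR : r < R := lt_of_le_of_lt (infDist_le_dist_of_mem hZne) hyx₀
  have hyZ : y ∉ Z := fun h => huy h.2
  have hrpos : 0 < r := (hZclosed.notMem_iff_infDist_pos ⟨x₀, hZne⟩).1 hyZ
  obtain ⟨z, hzZ, hzd⟩ := hZcpt.exists_infDist_eq_dist ⟨x₀, hZne⟩ y
  have hdzy : dist y z = r := hzd.symm
  have huz : u z = 0 := hzZ.2
  -- positivity inside the ball of radius r around y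
  have hposball : ∀ p : E3, dist p y < r → 0 < u p := by
    intro p hp
    have hpx₀ : dist p x₀ < 2*R := by
      calc dist p x₀ ≤ dist p y + dist y x₀ := dist_triangle _ _ _
        _ < r + R := by linarith
        _ ≤ 2*R := by linarith
    have hpΩ : p ∈ Ω := hsub3 (by rw [mem_closedBall]; linarith)
    rcases lt_or_eq_of_le (hnn p hpΩ) with h | h
    · exact h
    · exfalso
      have hpZ : p ∈ Z := ⟨by rw [mem_closedBall]; linarith, by simp [← h]⟩
      have h2 : infDist y Z ≤ dist y p := infDist_le_dist_of_mem hpZ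
      rw [dist_comm y p] at h2
      linarith
  -- the midpoint and the small sphere
  set c : E3 := y + (2⁻¹ : ℝ) • (z - y) with hcdef
  set ρ : ℝ := r/2 with hρdef
  have hρ : 0 < ρ := by positivity
  have hzc : z - c = (2⁻¹ : ℝ) • (z - y) := by
    rw [hcdef]; module
  have hcy : c - y = (2⁻¹ : ℝ) • (z - y) := by rw [hcdef]; module
  have hzy : ‖z - y‖ = r := by rw [← hdzy, dist_eq_norm, norm_sub_rev]
  have hzcn : ‖z - c‖ = ρ := by
    rw [hzc, norm_smul, hzy, Real.norm_eq_abs, abs_of_pos (by norm_num : (0:ℝ) < 2⁻¹)]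
    rw [hρdef]; ring
  have hcyn : ‖c - y‖ = ρ := by
    rw [hcy, norm_smul, hzy, Real.norm_eq_abs, abs_of_pos (by norm_num : (0:ℝ) < 2⁻¹)]
    rw [hρdef]; ring
  have hgeo : ∀ p : E3, ‖p - c‖ ≤ ρ → dist p y ≤ 2*ρ := by
    intro p hp
    calc dist p y ≤ dist p c + dist c y := dist_triangle _ _ _
      _ = ‖p - c‖ + ‖c - y‖ := by rw [dist_eq_norm, dist_eq_norm]
      _ ≤ ρ + ρ := by rw [hcyn]; linarith
      _ = 2*ρ := by ring
  have hr2ρ : r = 2*ρ := by rw [hρdef]; ring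
  have hgeoΩ : ∀ p : E3, ‖p - c‖ ≤ ρ → p ∈ Ω := by
    intro p hp
    have h1 := hgeo p hp
    rw [← hr2ρ] at h1
    apply hsub3
    rw [mem_closedBall]
    calc dist p x₀ ≤ dist p y + dist y x₀ := dist_triangle _ _ _
      _ ≤ r + R := by linarith
      _ ≤ 3*R := by linarith
  have hgeopos : ∀ p : E3, ‖p - c‖ < ρ → 0 < u p := by
    intro p hp
    apply hposball
    calc dist p y ≤ dist p c + dist c y := dist_triangle _ _ _
      _ = ‖p - c‖ + ρ := by rw [dist_eq_norm, dist_eq_norm, hcyn]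
      _ < ρ + ρ := by linarith
      _ = r := by rw [hr2ρ]; ring
  have hnormc : Continuous (fun p : E3 => ‖p - c‖) := (continuous_id.sub continuous_const).norm
  -- minimum of u on the inner sphere
  set S : Set E3 := (fun p : E3 => ‖p - c‖) ⁻¹' {ρ/2} with hSdef
  have hSsub : S ⊆ Ω := fun p hp => hgeoΩ p (by
    have : ‖p - c‖ = ρ/2 := hp
    linarith)
  have hScpt : IsCompact S := by
    apply isCompact_of_isClosed_isBounded (isClosed_singleton.preimage hnormc)
    apply (isBounded_closedBall (x := c) (r := ρ)).subset
    intro p hp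
    have : ‖p - c‖ = ρ/2 := hp
    rw [mem_closedBall, dist_eq_norm]
    linarith
  have hSne : S.Nonempty := by
    refine ⟨c + (2⁻¹ : ℝ) • (z - c), ?_⟩
    have h1 : c + (2⁻¹ : ℝ) • (z - c) - c = (2⁻¹ : ℝ) • (z - c) := by abel
    simp only [hSdef, mem_preimage, mem_singleton_iff]
    rw [h1, norm_smul, hzcn, Real.norm_eq_abs, abs_of_pos (by norm_num : (0:ℝ) < 2⁻¹)]
    ring
  obtain ⟨pm, hpmS, hpmmin⟩ := hScpt.exists_isMinOn hSne (hC.continuousOn.mono hSsub)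
  set δ₀ : ℝ := u pm with hδ₀def
  have hδ₀ : 0 < δ₀ := hgeopos pm (by
    have : ‖pm - c‖ = ρ/2 := hpmS
    linarith)
  set ε : ℝ := δ₀ * ρ with hεdef
  have hε : 0 < ε := by positivity
  -- the annulus
  set D : Set E3 := (fun p : E3 => ‖p - c‖) ⁻¹' (Ioo (ρ/2) ρ) with hDdef
  have hDopen : IsOpen D := isOpen_Ioo.preimage hnormc
  have hDb : IsBounded D := by
    apply (isBounded_ball (x := c) (r := ρ)).subset
    intro p hp
    rw [mem_ball, dist_eq_norm]
    exact hp.2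
  have hDne : D.Nonempty := by
    refine ⟨c + ((3/4 : ℝ)) • (z - c), ?_⟩
    have h1 : c + ((3/4 : ℝ)) • (z - c) - c = ((3/4 : ℝ)) • (z - c) := by abel
    simp only [hDdef, mem_preimage, mem_Ioo]
    rw [h1, norm_smul, hzcn, Real.norm_eq_abs, abs_of_pos (by norm_num : (0:ℝ) < 3/4)]
    constructor <;> nlinarith [hρ]
  have hclosD : closure D ⊆ (fun p : E3 => ‖p - c‖) ⁻¹' (Icc (ρ/2) ρ) :=
    closure_minimal (fun p hp => ⟨hp.1.le, hp.2.le⟩) (isClosed_Icc.preimage hnormc)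
  have hDsubΩ : D ⊆ Ω := fun p hp => hgeoΩ p hp.2.le
  have hclosDΩ : closure D ⊆ Ω := fun p hp => hgeoΩ p (hclosD hp).2
  -- the barrier comparison, for every β > 0
  have hkey : ∀ β : ℝ, 0 < β → ∀ p ∈ D,
      ε * ((‖p - c‖^2) ^ (-(1:ℝ)/2) - ρ⁻¹) - u p ≤ β * ρ^2 := by
    intro β hβ
    set v : E3 → ℝ := fun p => (fun p => bar ε β ρ⁻¹ (‖p - c‖^2)) p - u p with hvdef
    have hbarC : ContDiffOn ℝ 2 (fun p => bar ε β ρ⁻¹ (‖p - c‖^2)) D := by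
      intro p hp
      have hq : (0:ℝ) < ‖p - c‖^2 := by
        have := hp.1
        have h2 : (0:ℝ) < ‖p - c‖ := lt_trans (by positivity) this
        positivity
      exact (radial_contDiffAt (bar_contDiffAt hq)).contDiffWithinAt
    have hvc : ContinuousOn v (closure D) := by
      apply ContinuousOn.sub
      · intro p hp
        have hq : (0:ℝ) < ‖p - c‖^2 := by
          have := (hclosD hp).1
          have h2 : (0:ℝ) < ‖p - c‖ := lt_of_lt_of_le (by positivity) this
          positivity
        exact (radial_contDiffAt (bar_contDiffAt hq)).continuousAt.continuousWithinAt
      · exact hC.continuousOn.mono hclosDΩ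
    have hv2 : ContDiffOn ℝ 2 v D := hbarC.sub (hC.mono hDsubΩ)
    have hlapv : ∀ p ∈ D, 0 < laplacian v p := by
      intro p hp
      have hpc : p ≠ c := by
        intro h
        rw [h] at hp
        have := hp.1
        simp at this
        linarith
      rw [laplacian_sub hDopen hp hbarC (hC.mono hDsubΩ), laplacian_barrier hpc,
          hlapu p (hDsubΩ hp)]
      simpa using hβ
    obtain ⟨zb, hzbfr, hzbmax⟩ := maxPrinciple D hDopen hDb hDne hvc hv2 hlapv
    have hzbcl : zb ∈ closure D := frontier_subset_closure hzbfr
    have hzbnD : zb ∉ D := by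
      rw [frontier, hDopen.interior_eq] at hzbfr
      exact hzbfr.2
    have hzbIcc := hclosD hzbcl
    have hzbsph : ‖zb - c‖ = ρ/2 ∨ ‖zb - c‖ = ρ := by
      rcases lt_or_eq_of_le hzbIcc.1 with h1 | h1
      · rcases lt_or_eq_of_le hzbIcc.2 with h2 | h2
        · exact absurd (⟨h1, h2⟩ : ‖zb - c‖ ∈ Ioo (ρ/2) ρ) hzbnD
        · exact Or.inr h2
      · exact Or.inl h1.symm
    have hvzb : v zb ≤ β * ρ^2 := by
      rcases hzbsph with h | h
      · have hval : ((ρ/2:ℝ)^2) ^ (-(1:ℝ)/2) = (ρ/2)⁻¹ := rpow_negHalf_sq (by positivity)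
        have huzb : δ₀ ≤ u zb := hpmmin (by exact h)
        have hinv : (ρ/2)⁻¹ - ρ⁻¹ = ρ⁻¹ := by
          field_simp
          ring
        have hεvalue : ε * ρ⁻¹ = δ₀ := by
          rw [hεdef]
          field_simp
        simp only [hvdef, bar, h]
        rw [hval, hinv, hεvalue]
        nlinarith [mul_nonneg hβ.le (sq_nonneg ρ)]
      · have hval : ((ρ:ℝ)^2) ^ (-(1:ℝ)/2) = ρ⁻¹ := rpow_negHalf_sq hρ
        have huzb : 0 ≤ u zb := hnn zb (hclosDΩ hzbcl)
        simp only [hvdef, bar, h]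
        rw [hval]
        nlinarith
    intro p hp
    have h1 := hzbmax p (subset_closure hp)
    have hβn : 0 ≤ β * ‖p - c‖^2 := by positivity
    simp only [hvdef, bar] at h1 hvzb
    linarith
  -- let β → 0
  have hfinal : ∀ p ∈ D, ε * ((‖p - c‖^2) ^ (-(1:ℝ)/2) - ρ⁻¹) ≤ u p := by
    intro p hp
    have := aux_le (a := ε * ((‖p - c‖^2) ^ (-(1:ℝ)/2) - ρ⁻¹) - u p) (C := ρ^2)
      (sq_nonneg ρ) (fun β hβ => hkey β hβ p hp)
    linarith
  -- derivative of u at z along the direction towards c is zero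
  have hzΩ : z ∈ Ω := by
    apply hsub3
    rw [mem_closedBall]
    calc dist z x₀ ≤ dist z y + dist y x₀ := dist_triangle _ _ _
      _ ≤ r + R := by rw [dist_comm]; linarith [hdzy.le]
      _ ≤ 3*R := by linarith
  have hloc : IsLocalMin u z := by
    unfold IsLocalMin IsMinFilter
    rw [huz]
    filter_upwards [hΩ.mem_nhds hzΩ] with p hp
    exact hnn p hp
  have hfd : fderiv ℝ u z = 0 := hloc.fderiv_eq_zero
  set vec : E3 := c - z with hvecdef
  have hder : HasDerivAt (fun t : ℝ => u (z + t • vec)) 0 0 := by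
    have hdiff : DifferentiableAt ℝ u z :=
      (hC.differentiableOn (by norm_num)).differentiableAt (hΩ.mem_nhds hzΩ)
    have := line_deriv1 hdiff z vec 0 (by simp)
    rwa [hfd, ContinuousLinearMap.zero_apply] at this
  have hslope0 : Tendsto (slope (fun t : ℝ => u (z + t • vec)) 0)
      (nhdsWithin (0:ℝ) (Ioi 0)) (nhds 0) :=
    (hasDerivAt_iff_tendsto_slope.1 hder).mono_left
      (nhdsWithin_mono _ (fun t ht => ne_of_gt ht))
  have hev : ∀ᶠ t in nhdsWithin (0:ℝ) (Ioi 0),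
      ε/ρ ≤ slope (fun t : ℝ => u (z + t • vec)) 0 t := by
    have hIoo : Ioo (0:ℝ) 2⁻¹ ∈ nhdsWithin (0:ℝ) (Ioi 0) :=
      Ioo_mem_nhdsGT_of_mem ⟨le_refl 0, by norm_num⟩
    filter_upwards [hIoo] with t ht
    have ht0 : 0 < t := ht.1
    have ht1 : t < 2⁻¹ := ht.2
    have h1t : 0 < 1 - t := by linarith
    set pt : E3 := z + t • vec with hptdef
    have hptc : pt - c = (1 - t) • (z - c) := by
      rw [hptdef, hvecdef, smul_sub, sub_smul, one_smul, smul_sub]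
      abel
    have hptcn : ‖pt - c‖ = (1 - t) * ρ := by
      rw [hptc, norm_smul, hzcn, Real.norm_eq_abs, abs_of_pos h1t]
    have hptD : pt ∈ D := by
      have hmem : ‖pt - c‖ ∈ Set.Ioo (ρ/2) ρ := by
        rw [hptcn]
        exact ⟨by nlinarith, by nlinarith⟩
      exact hmem
    have hub := hfinal pt hptD
    have hval : (‖pt - c‖^2) ^ (-(1:ℝ)/2) = ((1 - t) * ρ)⁻¹ := by
      rw [hptcn, rpow_negHalf_sq (by positivity)]
    rw [hval] at hub
    have hinv : ((1 - t) * ρ)⁻¹ - ρ⁻¹ = t / ((1 - t) * ρ) := by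
      field_simp
      ring
    rw [hinv] at hub
    have hslope : slope (fun t : ℝ => u (z + t • vec)) 0 t = t⁻¹ * u pt := by
      have h0 : u (z + (0:ℝ) • vec) = 0 := by simpa using huz
      rw [slope_def_field]
      rw [h0, sub_zero, sub_zero, div_eq_inv_mul]
    rw [hslope, inv_mul_eq_div, le_div_iff₀ ht0]
    calc ε / ρ * t = ε * t / ρ := by ring
      _ ≤ ε * t / ((1 - t) * ρ) := by
        gcongr
        nlinarith
      _ = ε * (t / ((1 - t) * ρ)) := by ring
      _ ≤ u pt := hub
  have hcontra := ge_of_tendsto hslope0 hev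
  have : 0 < ε/ρ := by positivity
  linarith

end Strong
section Main
open Set Metric Bornology

/-- Strict bounds for the Green function at infinity: if `K ⊆ ℝ³` is compact with nonempty
frontier, `Ω = ℝ³ ∖ K` is connected, and `G` is continuous on the closure of `Ω`, harmonic
on `Ω`, vanishes on the frontier of `Ω`, and tends to `1` at infinity, then `0 < G < 1`
on `Ω`. -/
theorem green_function_strict_bounds
    (K : Set E3) (hK : IsCompact K) (hfr : (frontier K).Nonempty)
    (hconn : IsConnected (Kᶜ : Set E3)) (G : E3 → ℝ)
    (hcont : ContinuousOn G (closure Kᶜ))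
    (hharm : HarmonicOn G Kᶜ)
    (hbdry : ∀ p ∈ frontier Kᶜ, G p = 0)
    (hlim : Tendsto G (Filter.cocompact E3) (nhds 1)) :
    ∀ x ∈ Kᶜ, 0 < G x ∧ G x < 1 := by
  have hΩ : IsOpen (Kᶜ : Set E3) := hK.isClosed.isOpen_compl
  -- weak bounds
  have hle1 : ∀ x ∈ Kᶜ, G x ≤ 1 :=
    weak_bound_above K hK G hcont hharm.1 hharm.2 hbdry hlim zero_le_one le_rfl
  have hge0 : ∀ x ∈ Kᶜ, 0 ≤ G x := by
    have hneg : ∀ x ∈ Kᶜ, -G x ≤ 0 := by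
      apply weak_bound_above K hK (fun y => -G y) hcont.neg hharm.1.neg
      · intro x hx
        rw [laplacian_neg, hharm.2 x hx, neg_zero]
      · intro p hp
        rw [hbdry p hp, neg_zero]
      · exact hlim.neg
      · exact le_rfl
      · norm_num
    intro x hx
    linarith [hneg x hx]
  -- a far-away point where G is close to 1
  obtain ⟨C, hCcpt, hCsub⟩ := Filter.mem_cocompact.1
    (hlim.eventually_const_lt (show (1:ℝ)/2 < 1 by norm_num))
  obtain ⟨R₀, hR₀⟩ := (isBounded_iff_subset_closedBall 0).1 (hK.union hCcpt).isBounded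
  set pfar : E3 := (max R₀ 0 + 1) • EuclideanSpace.single 0 1 with hpfar
  have hpfarn : ‖pfar‖ = max R₀ 0 + 1 := by
    rw [hpfar, norm_smul, EuclideanSpace.norm_single, Real.norm_eq_abs]
    rw [abs_of_pos (by positivity : (0:ℝ) < max R₀ 0 + 1)]
    simp
  have hpfarout : pfar ∉ K ∪ C := by
    intro h
    have := hR₀ h
    rw [mem_closedBall, dist_eq_norm, sub_zero, hpfarn] at this
    have := le_max_left R₀ 0
    linarith [le_max_left R₀ 0]
  have hpfarK : pfar ∈ (Kᶜ : Set E3) := fun h => hpfarout (Or.inl h)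
  have hpfarG : 1/2 < G pfar := hCsub (fun h => hpfarout (Or.inr h))
  -- strict lower bound via the strong minimum principle
  have hZopen := strongMin Kᶜ hΩ G hharm.1 hharm.2 hge0
  have hUopen : IsOpen {x | x ∈ (Kᶜ : Set E3) ∧ 0 < G x} := by
    have := (hcont.mono (subset_closure)).isOpen_inter_preimage hΩ (isOpen_Ioi (a := (0:ℝ)))
    convert this using 1
    rfl
  have hGpos : ∀ x ∈ Kᶜ, 0 < G x := by
    have hcover : (Kᶜ : Set E3) ⊆ {x | x ∈ (Kᶜ : Set E3) ∧ G x = 0}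
        ∪ {x | x ∈ (Kᶜ : Set E3) ∧ 0 < G x} := by
      intro p hp
      rcases eq_or_lt_of_le (hge0 p hp) with h | h
      · exact Or.inl ⟨hp, h.symm⟩
      · exact Or.inr ⟨hp, h⟩
    have hdisj : Disjoint {x | x ∈ (Kᶜ : Set E3) ∧ G x = 0}
        {x | x ∈ (Kᶜ : Set E3) ∧ 0 < G x} := by
      rw [Set.disjoint_left]
      rintro p ⟨_, h0⟩ ⟨_, hpos⟩
      rw [h0] at hpos
      exact lt_irrefl 0 hpos
    rcases hconn.isPreconnected.subset_or_subset hZopen hUopen hdisj hcover with h | h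
    · exfalso
      have := (h hpfarK).2
      linarith
    · exact fun x hx => (h hx).2
  -- strict upper bound via the strong minimum principle applied to 1 - G
  have hH2 : ContDiffOn ℝ 2 (fun y => 1 - G y) Kᶜ := contDiffOn_const.sub hharm.1
  have hHlap : ∀ x ∈ Kᶜ, laplacian (fun y => 1 - G y) x = 0 := by
    intro x hx
    rw [laplacian_sub hΩ hx contDiffOn_const hharm.1, laplacian_const, hharm.2 x hx, sub_zero]
  have hHnn : ∀ x ∈ Kᶜ, 0 ≤ 1 - G x := fun x hx => by linarith [hle1 x hx]
  have hZ'open := strongMin Kᶜ hΩ (fun y => 1 - G y) hH2 hHlap hHnn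
  have hU'open : IsOpen {x | x ∈ (Kᶜ : Set E3) ∧ 0 < 1 - G x} := by
    have hHc : ContinuousOn (fun y => 1 - G y) (Kᶜ : Set E3) :=
      continuousOn_const.sub (hcont.mono subset_closure)
    have := hHc.isOpen_inter_preimage hΩ (isOpen_Ioi (a := (0:ℝ)))
    convert this using 1
    rfl
  -- a point near the frontier where G < 1/2
  obtain ⟨p₀, hp₀⟩ := hfr
  have hp₀fr : p₀ ∈ frontier (Kᶜ : Set E3) := by rwa [frontier_compl]
  have hp₀G : G p₀ = 0 := hbdry p₀ hp₀fr
  have hp₀cl : p₀ ∈ closure (Kᶜ : Set E3) := by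
    rw [frontier_eq_closure_inter_closure] at hp₀fr
    exact hp₀fr.1
  have hNB : (nhdsWithin p₀ (Kᶜ : Set E3)).NeBot :=
    mem_closure_iff_nhdsWithin_neBot.1 hp₀cl
  have htendsG : Tendsto G (nhdsWithin p₀ (Kᶜ : Set E3)) (nhds 0) := by
    have h1 : Tendsto G (nhdsWithin p₀ (closure (Kᶜ : Set E3))) (nhds (G p₀)) := hcont p₀ hp₀cl
    rw [hp₀G] at h1
    exact h1.mono_left (nhdsWithin_mono _ subset_closure)
  have hev : ∀ᶠ y in nhdsWithin p₀ (Kᶜ : Set E3), G y < 1/2 ∧ y ∈ (Kᶜ : Set E3) :=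
    (htendsG.eventually_lt_const (by norm_num : (0:ℝ) < 1/2)).and self_mem_nhdsWithin
  obtain ⟨ynear, hynear⟩ := hev.exists
  have hGlt1 : ∀ x ∈ Kᶜ, G x < 1 := by
    have hcover : (Kᶜ : Set E3) ⊆ {x | x ∈ (Kᶜ : Set E3) ∧ (fun y => 1 - G y) x = 0}
        ∪ {x | x ∈ (Kᶜ : Set E3) ∧ 0 < 1 - G x} := by
      intro p hp
      rcases eq_or_lt_of_le (hHnn p hp) with h | h
      · exact Or.inl ⟨hp, h.symm⟩
      · exact Or.inr ⟨hp, h⟩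
    have hdisj : Disjoint {x | x ∈ (Kᶜ : Set E3) ∧ (fun y => 1 - G y) x = 0}
        {x | x ∈ (Kᶜ : Set E3) ∧ 0 < 1 - G x} := by
      rw [Set.disjoint_left]
      rintro p ⟨_, h0⟩ ⟨_, hpos⟩
      simp only at h0
      rw [h0] at hpos
      exact lt_irrefl 0 hpos
    rcases hconn.isPreconnected.subset_or_subset hZ'open hU'open hdisj hcover with h | h
    · exfalso
      have := (h hynear.2).2
      linarith [hynear.1]
    · intro x hx
      have := (h hx).2
      linarith
  exact fun x hx => ⟨hGpos x hx, hGlt1 x hx⟩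

end Main
end

section
/- Let K ⊆ ℝ³ be compact and Ω = ℝ³ ∖ K. Suppose u and G are both continuous on the closure of Ω and harmonic on Ω, both satisfy u(x) → 1 and G(x) → 1 as ‖x‖ → ∞, u ≥ 0 at every point of the frontier of Ω, and G = 0 at every point of the frontier of Ω. Then u(x) ≥ G(x) for every x ∈ Ω. -/
open Filter
open Topology

noncomputable def phi (y : E3) : ℝ := -((1 + ‖y‖^2) ^ (-(1/2) : ℝ))

lemma q_pos (y : E3) : (0:ℝ) < 1 + ‖y‖^2 := by positivity

lemma hasFDerivAt_q (x : E3) :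
    HasFDerivAt (fun y : E3 => 1 + ‖y‖^2) ((2:ℝ) • (innerSL ℝ x : E3 →L[ℝ] ℝ)) x := by
  have h := (hasStrictFDerivAt_norm_sq x).hasFDerivAt.const_add 1
  rw [← Nat.cast_smul_eq_nsmul ℝ 2 ((innerSL ℝ) x)] at h
  simpa using h

lemma hasFDerivAt_phi (x : E3) :
    HasFDerivAt phi (((1 + ‖x‖^2) ^ (-(3/2) : ℝ)) • (innerSL ℝ x : E3 →L[ℝ] ℝ)) x := by
  have h1 := (Real.hasDerivAt_rpow_const (x := 1 + ‖x‖^2) (p := -(1/2))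
    (Or.inl (q_pos x).ne')).comp_hasFDerivAt x (hasFDerivAt_q x)
  have h2 := h1.neg
  refine h2.congr_fderiv ?_
  rw [smul_smul, ← neg_smul]
  congr 1
  have hexp : (-(1/2) - 1 : ℝ) = -(3/2) := by norm_num
  rw [hexp]; ring

lemma contDiffAt_phi (x : E3) : ContDiffAt ℝ 2 phi x := by
  have h1 : ContDiffAt ℝ 2 (fun y : E3 => 1 + ‖y‖^2) x :=
    (contDiff_const.add (contDiff_norm_sq ℝ)).contDiffAt
  have h2 : ContDiffAt ℝ 2 (fun t : ℝ => t ^ (-(1/2):ℝ)) (1 + ‖x‖^2) :=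
    Real.contDiffAt_rpow_const_of_ne (q_pos x).ne'
  exact (h2.comp x h1).neg

lemma fderiv_phi_eq (e : E3) :
    (fun y : E3 => fderiv ℝ phi y e)
      = fun y : E3 => ((1 + ‖y‖^2) ^ (-(3/2) : ℝ)) * ((innerSL ℝ e : E3 →L[ℝ] ℝ) y) := by
  funext y
  rw [(hasFDerivAt_phi y).fderiv]
  simp [mul_comm]
  exact Or.inl (real_inner_comm _ _)

lemma hasFDerivAt_rpow_q (x : E3) (p : ℝ) :
    HasFDerivAt (fun y : E3 => (1 + ‖y‖^2) ^ p)
      ((p * (1 + ‖x‖^2) ^ (p - 1)) • ((2:ℝ) • (innerSL ℝ x : E3 →L[ℝ] ℝ))) x := by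
  have h := (Real.hasDerivAt_rpow_const (x := 1 + ‖x‖^2) (p := p)
    (Or.inl (q_pos x).ne')).comp_hasFDerivAt x (hasFDerivAt_q x)
  exact h

lemma phi_second (x e : E3) :
    fderiv ℝ (fun y : E3 => fderiv ℝ phi y e) x e
      = (1 + ‖x‖^2) ^ (-(3/2) : ℝ) * ‖e‖^2
        - 3 * (1 + ‖x‖^2) ^ (-(5/2) : ℝ) * (inner ℝ x e : ℝ)^2 := by
  rw [fderiv_phi_eq]
  have hc := hasFDerivAt_rpow_q x (-(3/2))
  have hb : HasFDerivAt (fun y : E3 => (innerSL ℝ e : E3 →L[ℝ] ℝ) y)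
      (innerSL ℝ e : E3 →L[ℝ] ℝ) x := (innerSL ℝ e : E3 →L[ℝ] ℝ).hasFDerivAt
  have h := hc.mul hb
  rw [show (fun y : E3 => (1 + ‖y‖^2) ^ (-(3/2) : ℝ) * (innerSL ℝ e : E3 →L[ℝ] ℝ) y)
      = ((fun y : E3 => (1 + ‖y‖^2) ^ (-(3/2) : ℝ)) * fun y => (innerSL ℝ e : E3 →L[ℝ] ℝ) y)
      from rfl, h.fderiv]
  have hexp : (-(3/2) - 1 : ℝ) = -(5/2) := by norm_num
  have hnorm : ‖e‖^2 = (inner ℝ e e : ℝ) := (real_inner_self_eq_norm_sq e).symm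
  simp only [hexp] at h ⊢
  rw [hnorm]
  simp only [ContinuousLinearMap.add_apply, ContinuousLinearMap.smul_apply, innerSL_apply_apply, smul_eq_mul]
  rw [real_inner_comm e x]
  ring

lemma laplacian_eq_sum (v : E3 → ℝ) (x : E3) (hv : DifferentiableAt ℝ (fderiv ℝ v) x) :
    laplacian v x = ∑ i : Fin 3,
      fderiv ℝ (fun y => fderiv ℝ v y (EuclideanSpace.single i 1)) x (EuclideanSpace.single i 1) := by
  refine Finset.sum_congr rfl fun i _ => ?_
  set e : E3 := EuclideanSpace.single i 1
  rw [iteratedFDeriv_two_apply]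
  have h := ((ContinuousLinearMap.apply ℝ ℝ e).hasFDerivAt
    (x := fderiv ℝ v x)).comp x hv.hasFDerivAt
  rw [show (fun y => fderiv ℝ v y e) = (ContinuousLinearMap.apply ℝ ℝ e) ∘ (fderiv ℝ v) from rfl,
    h.fderiv]
  simp

lemma diff_fderiv_of_contDiffAt {v : E3 → ℝ} {x : E3} (hv : ContDiffAt ℝ 2 v x) :
    DifferentiableAt ℝ (fderiv ℝ v) x :=
  (hv.fderiv_right (m := 1) le_rfl).differentiableAt one_ne_zero

lemma sum_sq_eq_norm_sq (x : E3) : ∑ i : Fin 3, (x i)^2 = ‖x‖^2 := by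
  rw [EuclideanSpace.norm_eq, Real.sq_sqrt (by positivity)]
  simp [sq_abs]

lemma laplacian_phi_pos (x : E3) : 0 < laplacian phi x := by
  rw [laplacian_eq_sum phi x (diff_fderiv_of_contDiffAt (contDiffAt_phi x))]
  have hq := q_pos x
  have key : ∀ i : Fin 3,
      fderiv ℝ (fun y => fderiv ℝ phi y (EuclideanSpace.single i 1)) x (EuclideanSpace.single i 1)
        = (1 + ‖x‖^2) ^ (-(3/2) : ℝ) - 3 * (1 + ‖x‖^2) ^ (-(5/2) : ℝ) * (x i)^2 := by
    intro i
    rw [phi_second]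
    have h1 : ‖(EuclideanSpace.single i 1 : E3)‖ = 1 := by
      simp [EuclideanSpace.norm_single]
    have h2 : (inner ℝ x (EuclideanSpace.single i 1 : E3) : ℝ) = x i := by
      simp [EuclideanSpace.inner_single_right]
    rw [h1, h2]; ring
  rw [Finset.sum_congr rfl fun i _ => key i]
  rw [Finset.sum_sub_distrib, Finset.sum_const]
  have : ∑ i : Fin 3, 3 * (1 + ‖x‖^2) ^ (-(5/2) : ℝ) * (x i)^2
      = 3 * (1 + ‖x‖^2) ^ (-(5/2) : ℝ) * ‖x‖^2 := by
    rw [← Finset.mul_sum, sum_sq_eq_norm_sq]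
  rw [this]
  have hsplit : (1 + ‖x‖^2) ^ (-(3/2) : ℝ) = (1 + ‖x‖^2) ^ (-(5/2) : ℝ) * (1 + ‖x‖^2) := by
    rw [← Real.rpow_add_one hq.ne' (-(5/2))]
    norm_num
  rw [hsplit]
  have hpos : (0:ℝ) < (1 + ‖x‖^2) ^ (-(5/2) : ℝ) := Real.rpow_pos_of_pos hq _
  rw [show (Finset.univ.card : ℕ) = 3 from by simp]
  have : (3:ℕ) • ((1 + ‖x‖^2) ^ (-(5/2) : ℝ) * (1 + ‖x‖^2))
      - 3 * (1 + ‖x‖^2) ^ (-(5/2) : ℝ) * ‖x‖^2 = 3 * (1 + ‖x‖^2) ^ (-(5/2) : ℝ) := by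
    push_cast [nsmul_eq_mul]
    ring
  rw [this]
  positivity

lemma second_deriv_nonneg {v : E3 → ℝ} {x₀ : E3} (hv : ContDiffAt ℝ 2 v x₀)
    (hmin : IsLocalMin v x₀) (e : E3) :
    0 ≤ fderiv ℝ (fun y => fderiv ℝ v y e) x₀ e := by
  by_contra hneg
  push_neg at hneg
  -- the line through x₀ in direction e
  set ℓ : ℝ → E3 := fun t => x₀ + t • e with hℓ
  have hl0 : ℓ 0 = x₀ := by simp [hℓ]
  have hline : ∀ t : ℝ, HasDerivAt ℓ e t := by
    intro t
    simpa [hℓ] using ((hasDerivAt_id t).smul_const e).const_add x₀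
  -- an open set where v is C²
  obtain ⟨U₀, hU₀nhds, hU₀⟩ : ∃ U ∈ 𝓝 x₀, ContDiffOn ℝ 2 v U :=
    hv.contDiffOn le_rfl (by simp)
  set U : Set E3 := interior U₀ with hUdef
  have hUopen : IsOpen U := isOpen_interior
  have hU : ContDiffOn ℝ 2 v U := hU₀.mono interior_subset
  have hUnhds : U ∈ 𝓝 x₀ := by
    rw [hUdef]; exact interior_mem_nhds.mpr hU₀nhds
  -- first derivative along the line
  set g1 : ℝ → ℝ := fun t => fderiv ℝ v (ℓ t) e with hg1
  have hg1_zero : g1 0 = 0 := by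
    rw [hg1]; simp [hl0, hmin.fderiv_eq_zero]
  -- g1 has derivative `a < 0` at 0
  have hd : DifferentiableAt ℝ (fun y => fderiv ℝ v y e) x₀ := by
    have h1 := (ContinuousLinearMap.apply ℝ ℝ e).differentiable.differentiableAt
      (x := fderiv ℝ v x₀)
    exact h1.comp x₀ (diff_fderiv_of_contDiffAt hv)
  have ha : HasDerivAt g1 (fderiv ℝ (fun y => fderiv ℝ v y e) x₀ e) 0 := by
    have hstep := hd.hasFDerivAt
    rw [← hl0] at hstep
    have := hstep.comp_hasDerivAt 0 (hline 0)
    simp only [hl0] at this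
    exact this
  -- eventually g1 < 0 on the right
  have hslope : Tendsto (slope g1 0) (𝓝[≠] (0:ℝ)) (𝓝 _) := hasDerivAt_iff_tendsto_slope.mp ha
  have hev3 : ∀ᶠ t in 𝓝[>] (0:ℝ), g1 t < 0 := by
    have h1 : ∀ᶠ t in 𝓝[≠] (0:ℝ), slope g1 0 t < 0 := hslope.eventually (Iio_mem_nhds hneg)
    have h2 : ∀ᶠ t in 𝓝[>] (0:ℝ), slope g1 0 t < 0 :=
      h1.filter_mono (nhdsWithin_mono 0 fun t ht => ne_of_gt ht)
    rw [eventually_nhdsWithin_iff] at h2 ⊢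
    filter_upwards [h2] with t ht htpos
    have h3 := ht htpos
    rw [slope_def_field, hg1_zero, sub_zero, sub_zero] at h3
    have := mul_neg_of_neg_of_pos h3 htpos
    rwa [div_mul_cancel₀] at this
    exact (ne_of_gt htpos)
  -- eventually near 0 the line is in U and v x₀ is a lower bound
  have hcontℓ : ContinuousAt ℓ 0 := (hline 0).differentiableAt.continuousAt
  have hev1 : ∀ᶠ t in 𝓝 (0:ℝ), ℓ t ∈ U := by
    have := hcontℓ.preimage_mem_nhds (by rw [hl0]; exact hUnhds)
    exact this
  have hev2 : ∀ᶠ t in 𝓝 (0:ℝ), v x₀ ≤ v (ℓ t) := by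
    have h := hcontℓ.tendsto
    rw [hl0] at h
    exact h.eventually hmin
  rw [eventually_nhdsWithin_iff] at hev3
  obtain ⟨δ, hδpos, hδ⟩ := Metric.eventually_nhds_iff.mp ((hev1.and hev2).and hev3)
  set b : ℝ := δ / 2 with hb
  have hbpos : 0 < b := by positivity
  have hmem : ∀ t ∈ Set.Icc (0:ℝ) b, dist t 0 < δ := by
    intro t ht
    rw [Real.dist_eq, sub_zero, abs_of_nonneg ht.1]
    calc t ≤ b := ht.2
    _ < δ := by rw [hb]; linarith
  have hderivg : ∀ t ∈ Set.Icc (0:ℝ) b, HasDerivAt (fun s => v (ℓ s)) (g1 t) t := by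
    intro t ht
    have hdiff : DifferentiableAt ℝ v (ℓ t) :=
      (hU.contDiffAt (hUopen.mem_nhds ((hδ (hmem t ht)).1.1))).differentiableAt (by norm_num)
    exact hdiff.hasFDerivAt.comp_hasDerivAt t (hline t)
  have hcontg : ContinuousOn (fun s => v (ℓ s)) (Set.Icc (0:ℝ) b) :=
    fun t ht => ((hderivg t ht).continuousAt).continuousWithinAt
  have hanti : StrictAntiOn (fun s => v (ℓ s)) (Set.Icc (0:ℝ) b) := by
    apply strictAntiOn_of_deriv_neg (convex_Icc 0 b) hcontg
    intro t ht
    rw [interior_Icc] at ht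
    rw [(hderivg t ⟨le_of_lt ht.1, le_of_lt ht.2⟩).deriv]
    exact (hδ (hmem t ⟨le_of_lt ht.1, le_of_lt ht.2⟩)).2 ht.1
  have h1 : v (ℓ b) < v (ℓ 0) :=
    hanti (Set.left_mem_Icc.mpr hbpos.le) (Set.right_mem_Icc.mpr hbpos.le) hbpos
  have h2 : v x₀ ≤ v (ℓ b) := (hδ (hmem b (Set.right_mem_Icc.mpr hbpos.le))).1.2
  rw [hl0] at h1
  linarith

lemma diff_fderiv_apply {v : E3 → ℝ} {x : E3} (hv : ContDiffAt ℝ 2 v x) (e : E3) :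
    DifferentiableAt ℝ (fun y => fderiv ℝ v y e) x :=
  ((ContinuousLinearMap.apply ℝ ℝ e).differentiable.differentiableAt
    (x := fderiv ℝ v x)).comp x (diff_fderiv_of_contDiffAt hv)

lemma lap_lin {A B C : E3 → ℝ} {x₀ : E3} {U : Set E3} (hU : IsOpen U) (hx₀ : x₀ ∈ U)
    (hA : ContDiffOn ℝ 2 A U) (hB : ContDiffOn ℝ 2 B U) (hC : ∀ y, ContDiffAt ℝ 2 C y) (ε : ℝ) :
    laplacian (fun y => A y - B y - ε * C y) x₀
      = laplacian A x₀ - laplacian B x₀ - ε * laplacian C x₀ := by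
  have hA2 : ContDiffAt ℝ 2 A x₀ := hA.contDiffAt (hU.mem_nhds hx₀)
  have hB2 : ContDiffAt ℝ 2 B x₀ := hB.contDiffAt (hU.mem_nhds hx₀)
  have hC2 : ContDiffAt ℝ 2 C x₀ := hC x₀
  have hw2 : ContDiffAt ℝ 2 (fun y => A y - B y - ε * C y) x₀ :=
    (hA2.sub hB2).sub (contDiffAt_const.mul hC2)
  rw [laplacian_eq_sum _ x₀ (diff_fderiv_of_contDiffAt hw2),
    laplacian_eq_sum _ x₀ (diff_fderiv_of_contDiffAt hA2),
    laplacian_eq_sum _ x₀ (diff_fderiv_of_contDiffAt hB2),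
    laplacian_eq_sum _ x₀ (diff_fderiv_of_contDiffAt hC2),
    Finset.mul_sum, ← Finset.sum_sub_distrib, ← Finset.sum_sub_distrib]
  refine Finset.sum_congr rfl fun i _ => ?_
  set e : E3 := EuclideanSpace.single i 1
  have hev : (fun y => fderiv ℝ (fun z => A z - B z - ε * C z) y e)
      =ᶠ[nhds x₀] fun y => fderiv ℝ A y e - fderiv ℝ B y e - ε * fderiv ℝ C y e := by
    filter_upwards [hU.mem_nhds hx₀] with y hy
    have hAy : DifferentiableAt ℝ A y := (hA.contDiffAt (hU.mem_nhds hy)).differentiableAt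
      (by norm_num)
    have hBy : DifferentiableAt ℝ B y := (hB.contDiffAt (hU.mem_nhds hy)).differentiableAt
      (by norm_num)
    have hCy : DifferentiableAt ℝ C y := (hC y).differentiableAt (by norm_num)
    have h := (hAy.hasFDerivAt.sub hBy.hasFDerivAt).sub (hCy.hasFDerivAt.const_mul ε)
    rw [show (fun z => A z - B z - ε * C z) = (A - B - fun y => ε * C y) from rfl, h.fderiv]
    simp
  rw [hev.fderiv_eq]
  have hAd := (diff_fderiv_apply hA2 e).hasFDerivAt
  have hBd := (diff_fderiv_apply hB2 e).hasFDerivAt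
  have hCd := (diff_fderiv_apply hC2 e).hasFDerivAt
  have h := (hAd.sub hBd).sub (hCd.const_mul ε)
  rw [show (fun y => fderiv ℝ A y e - fderiv ℝ B y e - ε * fderiv ℝ C y e)
      = ((fun y => fderiv ℝ A y e) - (fun y => fderiv ℝ B y e)) - (fun y => ε * fderiv ℝ C y e)
      from rfl, h.fderiv]
  simp

lemma phi_neg (y : E3) : phi y < 0 := by
  have := Real.rpow_pos_of_pos (q_pos y) (-(1/2) : ℝ)
  simp only [phi]; linarith

lemma phi_ge_neg_one (y : E3) : -1 ≤ phi y := by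
  have h1 : (1:ℝ) ≤ 1 + ‖y‖^2 := by nlinarith [sq_nonneg ‖y‖]
  have := Real.rpow_le_one_of_one_le_of_nonpos h1 (by norm_num : (-(1/2):ℝ) ≤ 0)
  simp only [phi]; linarith

lemma phi_lim : Tendsto phi (cocompact E3) (nhds 0) := by
  have h1 : Tendsto (fun y : E3 => 1 + ‖y‖^2) (cocompact E3) atTop := by
    apply tendsto_atTop_add_const_left
    exact (tendsto_pow_atTop (two_ne_zero)).comp tendsto_norm_cocompact_atTop
  have h2 : Tendsto (fun t : ℝ => t ^ (-(1/2):ℝ)) atTop (nhds 0) := by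
    have := tendsto_rpow_neg_atTop (by norm_num : (0:ℝ) < 1/2)
    simpa using this
  have h3 := (h2.comp h1).neg
  rw [show phi = fun y : E3 => -((1 + ‖y‖^2) ^ (-(1/2):ℝ)) from rfl]
  simpa using h3

/-- Comparison with the Green function at infinity: if `u` and `G` are continuous on the
closure of `Ω = ℝ³ ∖ K`, harmonic on `Ω`, both tend to `1` at infinity, `u ≥ 0` on the
frontier of `Ω` and `G = 0` on the frontier of `Ω`, then `u ≥ G` on `Ω`. -/
theorem static_potential_ge_green_function
    (K : Set E3) (hK : IsCompact K) (u G : E3 → ℝ)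
    (hucont : ContinuousOn u (closure Kᶜ)) (hGcont : ContinuousOn G (closure Kᶜ))
    (huharm : HarmonicOn u Kᶜ) (hGharm : HarmonicOn G Kᶜ)
    (hulim : Tendsto u (Filter.cocompact E3) (nhds 1))
    (hGlim : Tendsto G (Filter.cocompact E3) (nhds 1))
    (hubdry : ∀ p ∈ frontier Kᶜ, 0 ≤ u p)
    (hGbdry : ∀ p ∈ frontier Kᶜ, G p = 0) :
    ∀ x ∈ Kᶜ, G x ≤ u x := by

  intro x hx
  have hKc_open : IsOpen Kᶜ := hK.isClosed.isOpen_compl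
  suffices h : ∀ ε : ℝ, 0 < ε → G x ≤ u x + ε by
    by_contra hlt
    push_neg at hlt
    have := h ((G x - u x)/2) (by linarith)
    linarith
  intro ε hε
  by_contra hwx
  push_neg at hwx
  set w : E3 → ℝ := fun y => u y - G y - ε * phi y with hw
  have hwxneg : w x < 0 := by
    have h1 := phi_ge_neg_one x
    rw [hw]
    simp only
    nlinarith
  have hwlim : Tendsto w (Filter.cocompact E3) (nhds 0) := by
    have := (hulim.sub hGlim).sub (phi_lim.const_mul ε)
    simpa using this
  have hphicont : Continuous phi :=
    continuous_iff_continuousAt.mpr fun y => (contDiffAt_phi y).continuousAt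
  have hwcont : ContinuousOn w (closure Kᶜ) :=
    (hucont.sub hGcont).sub (continuousOn_const.mul hphicont.continuousOn)
  have hxcl : x ∈ closure Kᶜ := subset_closure hx
  have hev : ∀ᶠ y in Filter.cocompact E3 ⊓ Filter.principal (closure Kᶜ), w x ≤ w y := by
    have h1 : ∀ᶠ y in Filter.cocompact E3, w x ≤ w y :=
      (hwlim.eventually (Ioi_mem_nhds hwxneg)).mono fun y hy => le_of_lt hy
    exact h1.filter_mono inf_le_left
  obtain ⟨x₀, hx₀cl, hx₀min⟩ := hwcont.exists_isMinOn' isClosed_closure hxcl hev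
  have hx₀x : w x₀ ≤ w x := hx₀min hxcl
  have hx₀K : x₀ ∈ Kᶜ := by
    by_contra hmem
    have hfr : x₀ ∈ frontier Kᶜ := by
      rw [hKc_open.frontier_eq]
      exact ⟨hx₀cl, hmem⟩
    have h0 : w x₀ = u x₀ - ε * phi x₀ := by
      rw [hw]; simp only [hGbdry x₀ hfr]; ring
    have h1 := hubdry x₀ hfr
    have h2 := phi_neg x₀
    nlinarith
  have hloc : IsLocalMin w x₀ := by
    filter_upwards [hKc_open.mem_nhds hx₀K] with y hy
    exact hx₀min (subset_closure hy)
  have hu2 : ContDiffAt ℝ 2 u x₀ := huharm.1.contDiffAt (hKc_open.mem_nhds hx₀K)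
  have hG2 : ContDiffAt ℝ 2 G x₀ := hGharm.1.contDiffAt (hKc_open.mem_nhds hx₀K)
  have hw2 : ContDiffAt ℝ 2 w x₀ := (hu2.sub hG2).sub (contDiffAt_const.mul (contDiffAt_phi x₀))
  have hlapw : laplacian w x₀ = laplacian u x₀ - laplacian G x₀ - ε * laplacian phi x₀ :=
    lap_lin hKc_open hx₀K huharm.1 hGharm.1 contDiffAt_phi ε
  have hlap_nonneg : 0 ≤ laplacian w x₀ := by
    rw [laplacian_eq_sum w x₀ (diff_fderiv_of_contDiffAt hw2)]
    exact Finset.sum_nonneg fun i _ => second_deriv_nonneg hw2 hloc _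
  rw [hlapw, huharm.2 x₀ hx₀K, hGharm.2 x₀ hx₀K] at hlap_nonneg
  have hphilap := laplacian_phi_pos x₀
  nlinarith
end

section
/- Let K ⊆ ℝ³ be compact and Ω = ℝ³ ∖ K. Suppose u and G are both continuous on the closure of Ω and harmonic on Ω, both satisfy u(x) → 1 and G(x) → 1 as ‖x‖ → ∞, u ≥ 0 at every point of the frontier of Ω, and G = 0 at every point of the frontier of Ω. Suppose moreover that the limits m = lim_{‖x‖→∞} ‖x‖(1 − u(x)) and A = lim_{‖x‖→∞} ‖x‖(1 − G(x)) exist. Then m ≤ A. -/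
open Filter

lemma second_deriv_nonneg_of_isLocalMin {g : ℝ → ℝ} (hg : ContDiffAt ℝ 2 g 0)
    (hmin : IsLocalMin g 0) : 0 ≤ deriv (deriv g) 0 := by
  by_contra hc
  push_neg at hc
  -- deriv g is differentiable at 0
  have hg1 : ContDiffAt ℝ 1 (deriv g) 0 := by
    have := hg.fderiv_right (m := 1) (by norm_num)
    have h2 : ContDiffAt ℝ 1 (fun t : ℝ => fderiv ℝ g t 1) 0 :=
      (ContinuousLinearMap.apply ℝ ℝ (1:ℝ)).contDiff.contDiffAt.comp 0 this
    exact h2.congr_of_eventuallyEq (by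
      filter_upwards with t
      rw [← fderiv_apply_one_eq_deriv])
  have hd : HasDerivAt (deriv g) (deriv (deriv g) 0) 0 :=
    (hg1.differentiableAt one_ne_zero).hasDerivAt
  have hdg0 : deriv g 0 = 0 := hmin.deriv_eq_zero
  -- eventually deriv g t < 0 for t > 0 near 0
  have hslope : Tendsto (slope (deriv g) 0) (nhdsWithin 0 {(0:ℝ)}ᶜ)
      (nhds (deriv (deriv g) 0)) := hasDerivAt_iff_tendsto_slope.mp hd
  have hneg : ∀ᶠ t in nhdsWithin (0:ℝ) (Set.Ioi 0), deriv g t < 0 := by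
    have h1 : ∀ᶠ t in nhdsWithin 0 {(0:ℝ)}ᶜ, slope (deriv g) 0 t < 0 :=
      hslope.eventually_lt_const hc
    have h2 : nhdsWithin (0:ℝ) (Set.Ioi 0) ≤ nhdsWithin 0 {(0:ℝ)}ᶜ :=
      nhdsWithin_mono _ (fun t ht => ne_of_gt ht)
    filter_upwards [h2 h1, self_mem_nhdsWithin] with t ht ht0
    rw [slope_def_field, hdg0, sub_zero, sub_zero] at ht
    have := mul_neg_of_neg_of_pos ht (ht0 : (0:ℝ) < t)
    rwa [div_mul_cancel₀] at this
    exact ne_of_gt ht0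
  obtain ⟨δ, hδmem, hδ⟩ := mem_nhdsGT_iff_exists_Ioo_subset.mp hneg
  have hδpos : (0:ℝ) < δ := hδmem
  -- neighborhood where g is C² and g 0 ≤ g
  have hev : ∀ᶠ t in nhds (0:ℝ), ContDiffAt ℝ 2 g t ∧ g 0 ≤ g t :=
    (hg.eventually (by norm_num)).and hmin
  obtain ⟨r, hrpos, hr⟩ := Metric.eventually_nhds_iff.mp hev
  set b := min (δ/2) (r/2) with hb
  have hbpos : 0 < b := lt_min (by linarith) (by linarith)
  have hbr : ∀ t ∈ Set.Icc (0:ℝ) b, ContDiffAt ℝ 2 g t ∧ g 0 ≤ g t := by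
    intro t ht
    apply hr
    rw [Real.dist_eq]
    have : |t - 0| ≤ b := by
      rw [sub_zero, abs_of_nonneg ht.1]; exact ht.2
    exact lt_of_le_of_lt this (lt_of_le_of_lt (min_le_right _ _) (by linarith))
  have hanti : StrictAntiOn g (Set.Icc 0 b) := by
    apply strictAntiOn_of_deriv_neg (convex_Icc 0 b)
    · intro t ht
      exact ((hbr t ht).1.continuousAt).continuousWithinAt
    · intro t ht
      rw [interior_Icc] at ht
      apply hδ
      constructor
      · exact ht.1
      · exact lt_of_lt_of_le ht.2 (le_trans (min_le_left _ _) (by linarith))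
  have h1 : g b < g 0 := hanti (Set.left_mem_Icc.mpr hbpos.le) (Set.right_mem_Icc.mpr hbpos.le) hbpos
  have h2 : g 0 ≤ g b := (hbr b (Set.right_mem_Icc.mpr hbpos.le)).2
  linarith


lemma fderiv2_dir_nonneg {f : E3 → ℝ} {x : E3} (hf : ContDiffAt ℝ 2 f x)
    (hmin : IsLocalMin f x) (e : E3) : 0 ≤ fderiv ℝ (fderiv ℝ f) x e e := by
  set L : ℝ → E3 := fun t => x + t • e with hL
  have hL0 : L 0 = x := by simp [hL]
  have hLc : ContDiff ℝ 2 L := contDiff_const.add (contDiff_id.smul contDiff_const)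
  set g : ℝ → ℝ := fun t => f (L t) with hg
  have hfL : ContDiffAt ℝ 2 f (L 0) := by rw [hL0]; exact hf
  have hgC : ContDiffAt ℝ 2 g 0 := hfL.comp 0 hLc.contDiffAt
  have hgmin : IsLocalMin g 0 := by
    have hm2 : IsLocalMin f (L 0) := by rw [hL0]; exact hmin
    exact hm2.comp_continuous hLc.continuous.continuousAt
  have hLd : ∀ t : ℝ, HasDerivAt L e t := by
    intro t
    show HasDerivAt (fun t => x + t • e) e t
    simpa using ((hasDerivAt_id t).smul_const e).const_add x
  -- eventually, deriv g t = fderiv f (L t) e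
  have hev : ∀ᶠ t in nhds (0:ℝ), deriv g t = fderiv ℝ f (L t) e := by
    have hcont : ContinuousAt L 0 := hLc.continuous.continuousAt
    have h2 : ∀ᶠ t in nhds (0:ℝ), ContDiffAt ℝ 2 f (L t) :=
      hcont (hL0 ▸ hf.eventually (by norm_num))
    filter_upwards [h2] with t ht
    have hdf : DifferentiableAt ℝ f (L t) := ht.differentiableAt (by norm_num)
    exact (hdf.hasFDerivAt.comp_hasDerivAt t (hLd t)).deriv
  -- second derivative
  have hdf2 : HasFDerivAt (fderiv ℝ f) (fderiv ℝ (fderiv ℝ f) x) x := by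
    have h1 : ContDiffAt ℝ 1 (fderiv ℝ f) x := hf.fderiv_right (m := 1) (by norm_num)
    exact (h1.differentiableAt one_ne_zero).hasFDerivAt
  have happ : HasFDerivAt (fun y => fderiv ℝ f y e)
      ((ContinuousLinearMap.apply ℝ ℝ e).comp (fderiv ℝ (fderiv ℝ f) x)) x :=
    (ContinuousLinearMap.apply ℝ ℝ e).hasFDerivAt.comp x hdf2
  have hcomp : HasDerivAt (fun t => fderiv ℝ f (L t) e)
      (fderiv ℝ (fderiv ℝ f) x e e) 0 := by
    rw [← hL0] at happ
    have := happ.comp_hasDerivAt 0 (hLd 0)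
    simpa [Function.comp_def, hL0] using this
  have hkey : deriv (deriv g) 0 = fderiv ℝ (fderiv ℝ f) x e e := by
    rw [Filter.EventuallyEq.deriv_eq hev]
    exact hcomp.deriv
  rw [← hkey]
  exact second_deriv_nonneg_of_isLocalMin hgC hgmin

/-- The squared norm in coordinates. -/
noncomputable def qf : E3 → ℝ := fun y => ∑ i : Fin 3, y i ^ 2

/-- The (constant) second derivative of `qf`, as a linear map into linear maps. -/
noncomputable def Mq : E3 →L[ℝ] (E3 →L[ℝ] ℝ) :=
  ∑ i : Fin 3, (2 : ℝ) • ((EuclideanSpace.proj (𝕜 := ℝ) i).smulRight (EuclideanSpace.proj i))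

lemma Mq_apply (y e : E3) : Mq y e = ∑ i : Fin 3, 2 * (y i * e i) := by
  simp [Mq, ContinuousLinearMap.sum_apply, mul_comm, mul_assoc]

lemma hasFDerivAt_qf (y : E3) : HasFDerivAt qf (Mq y) y := by
  have h : ∀ i : Fin 3, HasFDerivAt (fun z : E3 => z i ^ 2)
      ((2 * y i) • (EuclideanSpace.proj (𝕜 := ℝ) i)) y := by
    intro i
    have hp : HasFDerivAt (fun z : E3 => z i) (EuclideanSpace.proj (𝕜 := ℝ) i) y :=
      (EuclideanSpace.proj (𝕜 := ℝ) i).hasFDerivAt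
    have := hp.mul hp
    have h2 : (fun z : E3 => z i * z i) = fun z : E3 => z i ^ 2 := by
      funext z; ring
    change HasFDerivAt (fun z : E3 => z i * z i) _ y at this
    rw [h2] at this
    rw [two_mul, add_smul]
    exact this
  have hsum : HasFDerivAt qf (∑ i : Fin 3, (2 * y i) • (EuclideanSpace.proj (𝕜 := ℝ) i)) y :=
    HasFDerivAt.fun_sum (fun i _ => h i)
  convert hsum using 1
  ext e
  simp only [Mq, ContinuousLinearMap.sum_apply, ContinuousLinearMap.smul_apply,
    ContinuousLinearMap.smulRight_apply, PiLp.proj_apply, smul_eq_mul]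
  apply Finset.sum_congr rfl
  intro i _
  ring

lemma fderiv_qf : fderiv ℝ qf = fun y => Mq y := funext fun y => (hasFDerivAt_qf y).fderiv

lemma fderiv2_qf (z : E3) : fderiv ℝ (fderiv ℝ qf) z = Mq := by
  rw [show fderiv ℝ qf = ⇑Mq from fderiv_qf]
  exact Mq.fderiv

lemma Mq_single (i : Fin 3) :
    Mq (EuclideanSpace.single i 1) (EuclideanSpace.single i 1) = 2 := by
  rw [Mq_apply]
  rw [Finset.sum_eq_single i]
  · simp [EuclideanSpace.single_apply]
  · intro j _ hj
    simp [EuclideanSpace.single_apply, hj]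
  · simp

lemma qf_contDiff : ContDiff ℝ 2 qf := by
  apply ContDiff.sum
  intro i _
  exact (EuclideanSpace.proj (𝕜 := ℝ) i).contDiff.pow 2

lemma qf_eq_norm_sq (y : E3) : qf y = ‖y‖ ^ 2 := by
  rw [EuclideanSpace.norm_eq, Real.sq_sqrt (by positivity)]
  unfold qf
  congr 1
  funext i
  rw [Real.norm_eq_abs, sq_abs]
lemma qf_nonneg (y : E3) : 0 ≤ qf y := Finset.sum_nonneg fun i _ => sq_nonneg _

lemma fderiv2_pert {u G : E3 → ℝ} {z : E3} (hu : ContDiffAt ℝ 2 u z) (hG : ContDiffAt ℝ 2 G z)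
    (ε : ℝ) (e : E3) :
    fderiv ℝ (fderiv ℝ (fun y => u y - G y - ε * qf y)) z e e
      = fderiv ℝ (fderiv ℝ u) z e e - fderiv ℝ (fderiv ℝ G) z e e - ε * Mq e e := by
  have hev : (fderiv ℝ (fun y => u y - G y - ε * qf y)) =ᶠ[nhds z]
      (fun y => fderiv ℝ u y - fderiv ℝ G y - ε • Mq y) := by
    filter_upwards [hu.eventually (by norm_num), hG.eventually (by norm_num)] with y hy1 hy2
    have d1 : DifferentiableAt ℝ u y := hy1.differentiableAt (by norm_num)
    have d2 : DifferentiableAt ℝ G y := hy2.differentiableAt (by norm_num)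
    have dq : DifferentiableAt ℝ qf y := (hasFDerivAt_qf y).differentiableAt
    rw [fderiv_fun_sub (f := fun y => u y - G y) (d1.sub d2) (dq.const_mul ε), fderiv_fun_sub d1 d2, fderiv_const_mul dq ε,
      (hasFDerivAt_qf y).fderiv]
  have hdu : DifferentiableAt ℝ (fderiv ℝ u) z :=
    (hu.fderiv_right (m := 1) (by norm_num)).differentiableAt one_ne_zero
  have hdG : DifferentiableAt ℝ (fderiv ℝ G) z :=
    (hG.fderiv_right (m := 1) (by norm_num)).differentiableAt one_ne_zero
  have hdq : DifferentiableAt ℝ (⇑Mq) z := Mq.differentiableAt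
  rw [Filter.EventuallyEq.fderiv_eq hev]
  rw [fderiv_fun_sub (f := fun y => fderiv ℝ u y - fderiv ℝ G y) (g := fun y => ε • Mq y)
    (hdu.sub hdG) (hdq.const_smul ε), fderiv_fun_sub hdu hdG,
    fderiv_fun_const_smul hdq ε, Mq.fderiv]
  simp [ContinuousLinearMap.sub_apply, ContinuousLinearMap.smul_apply, smul_eq_mul]

lemma laplacian_pert {u G : E3 → ℝ} {z : E3} (hu : ContDiffAt ℝ 2 u z) (hG : ContDiffAt ℝ 2 G z)
    (ε : ℝ) :
    laplacian (fun y => u y - G y - ε * qf y) z = laplacian u z - laplacian G z - 6 * ε := by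
  unfold laplacian
  have h : ∀ i : Fin 3,
      iteratedFDeriv ℝ 2 (fun y => u y - G y - ε * qf y) z
        ![EuclideanSpace.single i 1, EuclideanSpace.single i 1]
      = iteratedFDeriv ℝ 2 u z ![EuclideanSpace.single i 1, EuclideanSpace.single i 1]
        - iteratedFDeriv ℝ 2 G z ![EuclideanSpace.single i 1, EuclideanSpace.single i 1]
        - ε * 2 := by
    intro i
    rw [iteratedFDeriv_two_apply, iteratedFDeriv_two_apply, iteratedFDeriv_two_apply]
    simp only [Matrix.cons_val_zero, Matrix.cons_val_one, Matrix.head_cons]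
    rw [fderiv2_pert hu hG ε, Mq_single]
  rw [Finset.sum_congr rfl (fun i _ => h i), Finset.sum_sub_distrib, Finset.sum_sub_distrib]
  simp only [Finset.sum_const, Finset.card_univ, Fintype.card_fin, nsmul_eq_mul]
  ring

lemma laplacian_nonneg_of_isLocalMin {f : E3 → ℝ} {x : E3} (hf : ContDiffAt ℝ 2 f x)
    (hmin : IsLocalMin f x) : 0 ≤ laplacian f x := by
  unfold laplacian
  apply Finset.sum_nonneg
  intro i _
  rw [iteratedFDeriv_two_apply]
  simp only [Matrix.cons_val_zero, Matrix.cons_val_one, Matrix.head_cons]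
  exact fderiv2_dir_nonneg hf hmin _


/-- Comparison of expansion coefficients: with `u` and `G` as in the comparison `u ≥ G` on
the exterior domain `Ω = ℝ³ ∖ K` (both harmonic, tending to `1` at infinity, `u ≥ 0` and
`G = 0` on the frontier), if the limits `m = lim ‖x‖(1 − u(x))` and `A = lim ‖x‖(1 − G(x))`
exist, then `m ≤ A`. -/
theorem mass_le_green_coefficient
    (K : Set E3) (hK : IsCompact K) (u G : E3 → ℝ)
    (hucont : ContinuousOn u (closure Kᶜ)) (hGcont : ContinuousOn G (closure Kᶜ))
    (huharm : HarmonicOn u Kᶜ) (hGharm : HarmonicOn G Kᶜ)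
    (hulim : Tendsto u (Filter.cocompact E3) (nhds 1))
    (hGlim : Tendsto G (Filter.cocompact E3) (nhds 1))
    (hubdry : ∀ p ∈ frontier Kᶜ, 0 ≤ u p)
    (hGbdry : ∀ p ∈ frontier Kᶜ, G p = 0)
    (m A : ℝ)
    (hm : Tendsto (fun x : E3 => ‖x‖ * (1 - u x)) (Filter.cocompact E3) (nhds m))
    (hA : Tendsto (fun x : E3 => ‖x‖ * (1 - G x)) (Filter.cocompact E3) (nhds A)) :
    m ≤ A := by
  have hKopen : IsOpen Kᶜ := hK.isClosed.isOpen_compl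
  have main : ∀ x ∈ Kᶜ, G x ≤ u x := by
    intro x hx
    have hsub : ∀ δ > (0:ℝ), -δ ≤ u x - G x := by
      intro δ hδ
      have hwlim : Tendsto (fun y => u y - G y) (cocompact E3) (nhds 0) := by
        have := hulim.sub hGlim
        simpa using this
      have habs : ∀ᶠ t in nhds (0:ℝ), |t| < δ := by
        filter_upwards [Metric.ball_mem_nhds (0:ℝ) hδ] with t ht
        rwa [Metric.mem_ball, Real.dist_eq, sub_zero] at ht
      have hevδ : ∀ᶠ y in cocompact E3, |u y - G y| < δ := hwlim.eventually habs
      obtain ⟨S, hScomp, hS⟩ := Filter.mem_cocompact.mp hevδ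
      obtain ⟨R₀, hR₀⟩ := (hScomp.union hK).isBounded.subset_closedBall 0
      set R : ℝ := max R₀ ‖x‖ + 1 with hR
      have hRx : ‖x‖ < R := lt_of_le_of_lt (le_max_right R₀ ‖x‖) (by rw [hR]; linarith)
      have hRpos : 0 < R := lt_of_le_of_lt (norm_nonneg x) hRx
      have hRS : ∀ y : E3, ‖y‖ = R → y ∉ S := by
        intro y hy hyS
        have h1 : y ∈ Metric.closedBall (0:E3) R₀ := hR₀ (Or.inl hyS)
        rw [Metric.mem_closedBall, dist_zero_right, hy] at h1
        have : R₀ ≤ max R₀ ‖x‖ := le_max_left _ _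
        rw [hR] at h1
        linarith
      have heps : ∀ ε > (0:ℝ), -δ - ε * R^2 ≤ u x - G x - ε * qf x := by
        intro ε hε
        set v : E3 → ℝ := fun y => u y - G y - ε * qf y with hv
        set C : Set E3 := closure Kᶜ ∩ Metric.closedBall 0 R with hC
        have hCcomp : IsCompact C := (isCompact_closedBall (0:E3) R).inter_left isClosed_closure
        have hxC : x ∈ C := ⟨subset_closure hx,
          Metric.mem_closedBall.mpr (by rw [dist_zero_right]; exact hRx.le)⟩
        have hvcont : ContinuousOn v C := by
          apply ContinuousOn.sub
          · exact (hucont.mono Set.inter_subset_left).sub (hGcont.mono Set.inter_subset_left)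
          · exact (continuous_const.mul qf_contDiff.continuous).continuousOn
        obtain ⟨z, hzC, hzmin⟩ := hCcomp.exists_isMinOn ⟨x, hxC⟩ hvcont
        have hzball : ‖z‖ ≤ R := by
          have := hzC.2
          rwa [Metric.mem_closedBall, dist_zero_right] at this
        have hqz : qf z ≤ R^2 := by
          rw [qf_eq_norm_sq]
          have h0 : (0:ℝ) ≤ ‖z‖ := norm_nonneg z
          nlinarith
        have hvz : -δ - ε * R^2 ≤ v z := by
          by_cases hcase : z ∈ Kᶜ ∧ ‖z‖ < R
          · exfalso
            have hnhds : C ∈ nhds z := by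
              apply Filter.mem_of_superset
                ((hKopen.inter Metric.isOpen_ball).mem_nhds
                  ⟨hcase.1, by rw [Metric.mem_ball, dist_zero_right]; exact hcase.2⟩)
              rintro y ⟨hy1, hy2⟩
              exact ⟨subset_closure hy1, Metric.ball_subset_closedBall hy2⟩
            have hzloc : IsLocalMin v z := hzmin.isLocalMin hnhds
            have hCu : ContDiffAt ℝ 2 u z := huharm.1.contDiffAt (hKopen.mem_nhds hcase.1)
            have hCG : ContDiffAt ℝ 2 G z := hGharm.1.contDiffAt (hKopen.mem_nhds hcase.1)
            have hvC2 : ContDiffAt ℝ 2 v z := by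
              rw [hv]
              exact (hCu.sub hCG).sub (contDiffAt_const.mul qf_contDiff.contDiffAt)
            have h1 := laplacian_nonneg_of_isLocalMin hvC2 hzloc
            rw [hv] at h1
            rw [laplacian_pert hCu hCG ε, huharm.2 z hcase.1, hGharm.2 z hcase.1] at h1
            linarith
          · by_cases hzK : z ∈ Kᶜ
            · have hzR : ‖z‖ = R := by
                rcases lt_or_eq_of_le hzball with h | h
                · exact absurd ⟨hzK, h⟩ hcase
                · exact h
              have hzS : z ∉ S := hRS z hzR
              have hzw : |u z - G z| < δ := hS hzS
              have : -δ < u z - G z := by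
                have := neg_abs_le (u z - G z)
                linarith
              have : -δ - ε * R^2 ≤ (u z - G z) - ε * qf z := by nlinarith
              simpa [hv] using this
            · have hzf : z ∈ frontier Kᶜ := by
                have : z ∈ closure Kᶜ \ interior Kᶜ := ⟨hzC.1, by rwa [hKopen.interior_eq]⟩
                rwa [closure_diff_interior] at this
              have h0u : 0 ≤ u z := hubdry z hzf
              have h0G : G z = 0 := hGbdry z hzf
              have : -δ - ε * R^2 ≤ u z - G z - ε * qf z := by
                rw [h0G]
                nlinarith
              simpa [hv] using this
        have hmin' : v z ≤ v x := hzmin hxC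
        have : v x = u x - G x - ε * qf x := by rw [hv]
        linarith
      by_contra hcon
      push_neg at hcon
      have hden : (0:ℝ) < R^2 + qf x + 1 := by nlinarith [qf_nonneg x, sq_nonneg R]
      set ε : ℝ := (-δ - (u x - G x)) / (R^2 + qf x + 1) with hε
      have hεpos : 0 < ε := div_pos (by linarith) hden
      have hval : ε * (R^2 + qf x + 1) = -δ - (u x - G x) := by
        rw [hε]; field_simp
      have := heps ε hεpos
      nlinarith [qf_nonneg x]
    by_contra h
    push_neg at h
    have := hsub ((G x - u x)/2) (by linarith)
    linarith
  have hevle : ∀ᶠ x in cocompact E3,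
      (fun x : E3 => ‖x‖ * (1 - u x)) x ≤ (fun x : E3 => ‖x‖ * (1 - G x)) x := by
    filter_upwards [hK.compl_mem_cocompact] with y hy
    have h1 := main y hy
    exact mul_le_mul_of_nonneg_left (by linarith) (norm_nonneg y)
  exact le_of_tendsto_of_tendsto hm hA hevle
end
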